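/- arXiv:2410.14149 — 3 statements merged into one kernel-verified Lean document; each statement's English description precedes it below -/
import Mathlib

section
/- The Jacobi triple product specialization: φ(q) := ∑_{n=-∞}^∞ q^{n^2} = (-q;q^2)_∞^2 (q^2;q^2)_∞ for |q| < 1. -/
open scoped Topology

/-- The infinite q-Pochhammer symbol `(a; q)_∞ = ∏_{n=0}^∞ (1 - a q^n)`. -/
noncomputable def qPoch (a q : ℂ) : ℂ := ∏' n : ℕ, (1 - a * q ^ n)

/-- The Rogers–Ramanujan continued fraction in product form. -/
noncomputable def RR (q : ℂ) : ℂ :=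
  qPoch q (q ^ 5) * qPoch (q ^ 4) (q ^ 5) / (qPoch (q ^ 2) (q ^ 5) * qPoch (q ^ 3) (q ^ 5))

open Filter Finset Complex

noncomputable def PF (a Q : ℂ) (n : ℕ) : ℂ := ∏ i ∈ Finset.range n, (1 - a * Q ^ i)

noncomputable def gb (Q : ℂ) (m k : ℕ) : ℂ :=
  if k ≤ m then PF Q Q m / (PF Q Q k * PF Q Q (m - k)) else 0

lemma one_sub_ne {z : ℂ} (hz : ‖z‖ < 1) : (1 : ℂ) - z ≠ 0 := by
  intro h
  have : z = 1 := by linear_combination -h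
  simp [this] at hz

lemma h1Q {Q : ℂ} (hQ : ‖Q‖ < 1) (i : ℕ) : ‖Q * Q ^ i‖ < 1 := by
  rw [norm_mul, norm_pow]
  calc ‖Q‖ * ‖Q‖ ^ i ≤ ‖Q‖ * 1 :=
        mul_le_mul_of_nonneg_left (pow_le_one₀ (norm_nonneg _) hQ.le) (norm_nonneg _)
    _ < 1 := by simpa using hQ

lemma PFne {Q : ℂ} (hQ : ‖Q‖ < 1) (n : ℕ) : PF Q Q n ≠ 0 := by
  rw [PF, Finset.prod_ne_zero_iff]
  exact fun i _ => one_sub_ne (h1Q hQ i)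

lemma PF_succ (a Q : ℂ) (n : ℕ) : PF a Q (n + 1) = PF a Q n * (1 - a * Q ^ n) :=
  Finset.prod_range_succ _ _

lemma PF_zero (a Q : ℂ) : PF a Q 0 = 1 := Finset.prod_range_zero _

lemma gb_zero {Q : ℂ} (hQ : ‖Q‖ < 1) (m : ℕ) : gb Q m 0 = 1 := by
  rw [gb, if_pos (Nat.zero_le m), PF_zero, one_mul, Nat.sub_zero, div_self (PFne hQ m)]

lemma gb_self {Q : ℂ} (hQ : ‖Q‖ < 1) (m : ℕ) : gb Q m m = 1 := by
  rw [gb, if_pos le_rfl, Nat.sub_self, PF_zero, mul_one, div_self (PFne hQ m)]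

lemma gb_eq_zero {Q : ℂ} {m k : ℕ} (h : m < k) : gb Q m k = 0 := by
  simp [gb, show ¬(k ≤ m) from by omega]

lemma pascal {Q : ℂ} (hQ : ‖Q‖ < 1) (m i : ℕ) (h : i ≤ m) :
    gb Q (m + 1) (i + 1) = gb Q m (i + 1) + Q ^ (m - i) * gb Q m i := by
  rcases eq_or_lt_of_le h with rfl | hlt
  · rw [gb_self hQ, gb_self hQ, gb_eq_zero (Nat.lt_succ_self i), Nat.sub_self, pow_zero]
    ring
  · obtain ⟨t, rfl⟩ : ∃ t, m = i + t + 1 := ⟨m - i - 1, by omega⟩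
    have e1 : i + t + 1 + 1 - (i + 1) = t + 1 := by omega
    have e2 : i + t + 1 - (i + 1) = t := by omega
    have e3 : i + t + 1 - i = t + 1 := by omega
    rw [gb, gb, gb, if_pos (by omega), if_pos (by omega), if_pos (by omega), e1, e2, e3]
    rw [PF_succ Q Q (i + t + 1), PF_succ Q Q t, PF_succ Q Q i]
    have n1 := PFne hQ i
    have n2 := PFne hQ t
    have n3 := PFne hQ (i + t + 1)
    have n4 := one_sub_ne (h1Q hQ i)
    have n5 := one_sub_ne (h1Q hQ t)
    have n6 := one_sub_ne (h1Q hQ (i + t + 1))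
    field_simp
    ring

lemma gauss {q : ℂ} (hQ : ‖q ^ 2‖ < 1) (m : ℕ) (x : ℂ) :
    ∏ j ∈ range m, (1 + x * q ^ (2 * j + 1)) =
      ∑ k ∈ range (m + 1), gb (q ^ 2) m k * q ^ (k ^ 2) * x ^ k := by
  induction m with
  | zero => simp [gb_zero hQ]
  | succ m ih =>
    rw [Finset.prod_range_succ, ih]
    rw [Finset.sum_range_succ' (fun k => gb (q ^ 2) (m + 1) k * q ^ (k ^ 2) * x ^ k) (m + 1)]
    have hp : ∀ i ∈ range (m + 1),
        gb (q ^ 2) (m + 1) (i + 1) * q ^ ((i + 1) ^ 2) * x ^ (i + 1) =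
          gb (q ^ 2) m (i + 1) * q ^ ((i + 1) ^ 2) * x ^ (i + 1) +
          gb (q ^ 2) m i * q ^ (i ^ 2) * x ^ i * (x * q ^ (2 * m + 1)) := by
      intro i hi
      have him : i ≤ m := Nat.lt_succ_iff.mp (Finset.mem_range.mp hi)
      rw [pascal hQ m i him, add_mul, add_mul]
      congr 1
      obtain ⟨d, rfl⟩ : ∃ d, m = i + d := ⟨m - i, by omega⟩
      have e : i + d - i = d := by omega
      rw [e]
      have hpow : ((q:ℂ) ^ 2) ^ d * q ^ ((i + 1) ^ 2) = q ^ (i ^ 2) * q ^ (2 * (i + d) + 1) := by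
        rw [← pow_mul, ← pow_add, ← pow_add]
        congr 1
        ring
      calc (q ^ 2) ^ d * gb (q ^ 2) (i + d) i * q ^ ((i + 1) ^ 2) * x ^ (i + 1)
          = gb (q ^ 2) (i + d) i * ((q ^ 2) ^ d * q ^ ((i + 1) ^ 2)) * x ^ (i + 1) := by ring
        _ = gb (q ^ 2) (i + d) i * (q ^ (i ^ 2) * q ^ (2 * (i + d) + 1)) * x ^ (i + 1) := by
            rw [hpow]
        _ = gb (q ^ 2) (i + d) i * q ^ (i ^ 2) * x ^ i * (x * q ^ (2 * (i + d) + 1)) := by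
            rw [pow_succ]; ring
    rw [Finset.sum_congr rfl hp, Finset.sum_add_distrib]
    have h2 : ∑ i ∈ range (m + 1), gb (q ^ 2) m (i + 1) * q ^ ((i + 1) ^ 2) * x ^ (i + 1) =
        ∑ i ∈ range m, gb (q ^ 2) m (i + 1) * q ^ ((i + 1) ^ 2) * x ^ (i + 1) := by
      rw [Finset.sum_range_succ, gb_eq_zero (Nat.lt_succ_self m)]
      simp
    have h3 : ∑ k ∈ range (m + 1), gb (q ^ 2) m k * q ^ (k ^ 2) * x ^ k =
        ∑ i ∈ range m, gb (q ^ 2) m (i + 1) * q ^ ((i + 1) ^ 2) * x ^ (i + 1) +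
          gb (q ^ 2) m 0 * q ^ (0 ^ 2) * x ^ 0 :=
      Finset.sum_range_succ' _ m
    rw [h2, ← Finset.sum_mul, gb_zero hQ, h3, gb_zero hQ]
    ring
lemma sum_odd (N : ℕ) : ∑ i ∈ range N, (2 * i + 1) = N ^ 2 := by
  induction N with
  | zero => rfl
  | succ n ih => rw [Finset.sum_range_succ, ih]; ring

lemma finite_jtp {q : ℂ} (hq : ‖q‖ < 1) (hq0 : q ≠ 0) (N : ℕ) :
    (∏ j ∈ range N, (1 + q ^ (2 * j + 1))) ^ 2 =
      ∑ k ∈ range (2 * N + 1), gb (q ^ 2) (2 * N) k * q ^ ((((k : ℤ) - N).natAbs) ^ 2) := by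
  have hQ : ‖q ^ 2‖ < 1 := by
    rw [norm_pow]
    exact pow_lt_one₀ (norm_nonneg _) hq (by norm_num)
  have hNe : (q : ℂ) ^ (2 * N) ≠ 0 := pow_ne_zero _ hq0
  have hx := gauss hQ (2 * N) ((q ^ (2 * N))⁻¹)
  have lhs_eq : q ^ (N ^ 2) * ∏ j ∈ range (2 * N), (1 + (q ^ (2 * N))⁻¹ * q ^ (2 * j + 1)) =
      (∏ j ∈ range N, (1 + q ^ (2 * j + 1))) ^ 2 := by
    have hsplit : ∏ j ∈ range (2 * N), (1 + (q ^ (2 * N))⁻¹ * q ^ (2 * j + 1)) =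
        ((q ^ (2 * N))⁻¹) ^ N * q ^ (N ^ 2) *
          ((∏ j ∈ range N, (1 + q ^ (2 * j + 1))) * ∏ j ∈ range N, (1 + q ^ (2 * j + 1))) := by
      rw [show 2 * N = N + N from by omega, Finset.prod_range_add]
      have hA : ∏ i ∈ range N, (1 + (q ^ (N + N))⁻¹ * q ^ (2 * (N + i) + 1)) =
          ∏ i ∈ range N, (1 + q ^ (2 * i + 1)) := by
        refine Finset.prod_congr rfl fun i _ => ?_
        rw [show 2 * (N + i) + 1 = (N + N) + (2 * i + 1) from by omega, pow_add q (N + N),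
          inv_mul_cancel_left₀ (pow_ne_zero _ hq0)]
      have hB : ∏ i ∈ range N, (1 + (q ^ (N + N))⁻¹ * q ^ (2 * i + 1)) =
          ((q ^ (N + N))⁻¹) ^ N * q ^ (N ^ 2) * ∏ j ∈ range N, (1 + q ^ (2 * j + 1)) := by
        have hterm : ∀ i ∈ range N, (1 + (q ^ (N + N))⁻¹ * q ^ (2 * i + 1)) =
            (q ^ (N + N))⁻¹ * q ^ (2 * i + 1) * (1 + q ^ (2 * (N - 1 - i) + 1)) := by
          intro i hi
          have hiN : i < N := Finset.mem_range.mp hi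
          have hk : q ^ (2 * i + 1) * q ^ (2 * (N - 1 - i) + 1) = q ^ (N + N) := by
            rw [← pow_add]; congr 1; omega
          calc 1 + (q ^ (N + N))⁻¹ * q ^ (2 * i + 1)
              = (q ^ (N + N))⁻¹ * (q ^ (2 * i + 1) * q ^ (2 * (N - 1 - i) + 1)) +
                  (q ^ (N + N))⁻¹ * q ^ (2 * i + 1) := by
                rw [hk, inv_mul_cancel₀ (pow_ne_zero _ hq0)]
            _ = (q ^ (N + N))⁻¹ * q ^ (2 * i + 1) * (1 + q ^ (2 * (N - 1 - i) + 1)) := by ring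
        rw [Finset.prod_congr rfl hterm, Finset.prod_mul_distrib, Finset.prod_mul_distrib,
          Finset.prod_const, Finset.card_range, Finset.prod_pow_eq_pow_sum, sum_odd,
          Finset.prod_range_reflect (fun j => 1 + q ^ (2 * j + 1)) N]
      rw [hA, hB]
      ring
    rw [hsplit, show (2 : ℕ) * N = N + N from by omega]
    have : q ^ (N ^ 2) * (((q ^ (N + N))⁻¹) ^ N * q ^ (N ^ 2)) = 1 := by
      rw [inv_pow, ← pow_mul]
      calc q ^ (N ^ 2) * ((q ^ ((N + N) * N))⁻¹ * q ^ (N ^ 2))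
          = (q ^ (N ^ 2) * q ^ (N ^ 2)) * (q ^ ((N + N) * N))⁻¹ := by ring
        _ = q ^ ((N + N) * N) * (q ^ ((N + N) * N))⁻¹ := by
            rw [← pow_add]; congr 1; ring
        _ = 1 := mul_inv_cancel₀ (pow_ne_zero _ hq0)
    calc q ^ (N ^ 2) * (((q ^ (N + N))⁻¹) ^ N * q ^ (N ^ 2) *
          ((∏ j ∈ range N, (1 + q ^ (2 * j + 1))) * ∏ j ∈ range N, (1 + q ^ (2 * j + 1))))
        = q ^ (N ^ 2) * (((q ^ (N + N))⁻¹) ^ N * q ^ (N ^ 2)) *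
          ((∏ j ∈ range N, (1 + q ^ (2 * j + 1))) * ∏ j ∈ range N, (1 + q ^ (2 * j + 1))) := by
          ring
      _ = (∏ j ∈ range N, (1 + q ^ (2 * j + 1))) ^ 2 := by rw [this]; ring
  have rhs_eq : q ^ (N ^ 2) * ∑ k ∈ range (2 * N + 1),
        gb (q ^ 2) (2 * N) k * q ^ (k ^ 2) * ((q ^ (2 * N))⁻¹) ^ k =
      ∑ k ∈ range (2 * N + 1), gb (q ^ 2) (2 * N) k * q ^ ((((k : ℤ) - N).natAbs) ^ 2) := by
    rw [Finset.mul_sum]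
    refine Finset.sum_congr rfl fun k _ => ?_
    set w : ℕ := (((k : ℤ) - N).natAbs) ^ 2 with hwdef
    have hwz : (w : ℤ) = ((k : ℤ) - N) ^ 2 := by
      rw [hwdef]; push_cast; exact sq_abs _
    have hnat : N ^ 2 + k ^ 2 = w + 2 * N * k := by
      have : ((N ^ 2 + k ^ 2 : ℕ) : ℤ) = ((w + 2 * N * k : ℕ) : ℤ) := by
        push_cast
        rw [hwz]; ring
      exact_mod_cast this
    rw [inv_pow, ← pow_mul]
    calc q ^ (N ^ 2) * (gb (q ^ 2) (2 * N) k * q ^ (k ^ 2) * (q ^ (2 * N * k))⁻¹)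
        = gb (q ^ 2) (2 * N) k * (q ^ (N ^ 2) * q ^ (k ^ 2) * (q ^ (2 * N * k))⁻¹) := by ring
      _ = gb (q ^ 2) (2 * N) k * q ^ w := by
          rw [← pow_add, hnat, pow_add, mul_inv_cancel_right₀ (pow_ne_zero _ hq0)]
  calc (∏ j ∈ range N, (1 + q ^ (2 * j + 1))) ^ 2
      = q ^ (N ^ 2) * ∏ j ∈ range (2 * N), (1 + (q ^ (2 * N))⁻¹ * q ^ (2 * j + 1)) := lhs_eq.symm
    _ = q ^ (N ^ 2) * ∑ k ∈ range (2 * N + 1),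
          gb (q ^ 2) (2 * N) k * q ^ (k ^ 2) * ((q ^ (2 * N))⁻¹) ^ k := by rw [hx]
    _ = ∑ k ∈ range (2 * N + 1), gb (q ^ 2) (2 * N) k * q ^ ((((k : ℤ) - N).natAbs) ^ 2) := rhs_eq
lemma log_summable {a Q : ℂ} (hQ : ‖Q‖ < 1) :
    Summable (fun i : ℕ => ‖Complex.log (1 - a * Q ^ i)‖) := by
  have hg : Summable (fun i : ℕ => 3/2 * (‖a‖ * ‖Q‖ ^ i)) :=
    ((summable_geometric_of_lt_one (norm_nonneg Q) hQ).mul_left ‖a‖).mul_left (3/2)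
  refine Summable.of_norm_bounded_eventually hg ?_
  · rw [Nat.cofinite_eq_atTop]
    have h0 : Tendsto (fun i : ℕ => ‖a‖ * ‖Q‖ ^ i) atTop (𝓝 0) := by
      simpa using (tendsto_pow_atTop_nhds_zero_of_norm_lt_one (by simpa using hQ)).const_mul ‖a‖
    filter_upwards [h0.eventually_le_const (by norm_num : (0:ℝ) < 1/2)] with i hi
    rw [Real.norm_eq_abs, _root_.abs_of_nonneg (norm_nonneg _)]
    have h2 : (1 : ℂ) - a * Q ^ i = 1 + (-(a * Q ^ i)) := by ring
    rw [h2]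
    have h3 := Complex.norm_log_one_add_half_le_self (z := -(a * Q ^ i)) (by simpa [norm_mul, norm_pow] using hi)
    calc ‖Complex.log (1 + -(a * Q ^ i))‖ ≤ 3/2 * ‖-(a * Q ^ i)‖ := h3
    _ = 3/2 * (‖a‖ * ‖Q‖ ^ i) := by simp [norm_mul, norm_pow]

lemma PF_exp {a Q : ℂ} (h1 : ∀ i, ‖a * Q ^ i‖ < 1) (m : ℕ) :
    PF a Q m = Complex.exp (∑ i ∈ range m, Complex.log (1 - a * Q ^ i)) := by
  induction m with
  | zero => simp [PF]
  | succ n ih =>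
    rw [PF, Finset.prod_range_succ, ← PF, ih, Finset.sum_range_succ, Complex.exp_add,
      Complex.exp_log (one_sub_ne (h1 n))]

lemma PF_bounds {a Q : ℂ} (hQ : ‖Q‖ < 1) (h1 : ∀ i, ‖a * Q ^ i‖ < 1) (m : ℕ) :
    Real.exp (-(∑' i : ℕ, ‖Complex.log (1 - a * Q ^ i)‖)) ≤ ‖PF a Q m‖ ∧
    ‖PF a Q m‖ ≤ Real.exp (∑' i : ℕ, ‖Complex.log (1 - a * Q ^ i)‖) := by
  set L := ∑' i : ℕ, ‖Complex.log (1 - a * Q ^ i)‖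
  have hs := log_summable (a := a) hQ
  have hL : ‖∑ i ∈ range m, Complex.log (1 - a * Q ^ i)‖ ≤ L := by
    calc ‖∑ i ∈ range m, Complex.log (1 - a * Q ^ i)‖
        ≤ ∑ i ∈ range m, ‖Complex.log (1 - a * Q ^ i)‖ := norm_sum_le _ _
      _ ≤ L := hs.sum_le_tsum _ (fun i _ => norm_nonneg _)
  rw [PF_exp h1, Complex.norm_exp]
  constructor
  · apply Real.exp_le_exp.2
    have := (Complex.abs_re_le_norm (∑ i ∈ range m, Complex.log (1 - a * Q ^ i)))
    rw [abs_le] at this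
    · linarith [this.1]
  · apply Real.exp_le_exp.2
    have := (Complex.abs_re_le_norm (∑ i ∈ range m, Complex.log (1 - a * Q ^ i)))
    rw [abs_le] at this
    linarith [this.2]

lemma PF_hasProd {a Q : ℂ} (hQ : ‖Q‖ < 1) (h1 : ∀ i, ‖a * Q ^ i‖ < 1) :
    HasProd (fun i : ℕ => 1 - a * Q ^ i)
      (Complex.exp (∑' i : ℕ, Complex.log (1 - a * Q ^ i))) := by
  have hs : Summable (fun i : ℕ => Complex.log (1 - a * Q ^ i)) :=
    (log_summable hQ).of_norm
  have := hs.hasSum.cexp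
  exact this.congr_fun (fun i => (Complex.exp_log (one_sub_ne (h1 i))).symm)

lemma PF_tendsto {a Q : ℂ} (hQ : ‖Q‖ < 1) (h1 : ∀ i, ‖a * Q ^ i‖ < 1) :
    Tendsto (fun m => PF a Q m) atTop (𝓝 (∏' i : ℕ, (1 - a * Q ^ i))) := by
  have h := PF_hasProd hQ h1
  rw [h.tprod_eq]
  exact h.tendsto_prod_nat

lemma tprod_ne {a Q : ℂ} (hQ : ‖Q‖ < 1) (h1 : ∀ i, ‖a * Q ^ i‖ < 1) :
    (∏' i : ℕ, (1 - a * Q ^ i)) ≠ 0 := by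
  rw [(PF_hasProd hQ h1).tprod_eq]
  exact Complex.exp_ne_zero _
lemma haQ {a Q : ℂ} (ha : ‖a‖ < 1) (hQ1 : ‖Q‖ ≤ 1) (i : ℕ) : ‖a * Q ^ i‖ < 1 := by
  rw [norm_mul, norm_pow]
  calc ‖a‖ * ‖Q‖ ^ i ≤ ‖a‖ * 1 :=
        mul_le_mul_of_nonneg_left (pow_le_one₀ (norm_nonneg _) hQ1) (norm_nonneg _)
    _ = ‖a‖ := by norm_num
    _ < 1 := ha

theorem main {q : ℂ} (hq : ‖q‖ < 1) (hq0 : q ≠ 0) :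
    ∑' n : ℤ, q ^ (n.natAbs ^ 2) =
      (∏' i : ℕ, (1 - (-q) * (q ^ 2) ^ i)) ^ 2 * ∏' i : ℕ, (1 - q ^ 2 * (q ^ 2) ^ i) := by
  have hQn : ‖q ^ 2‖ < 1 := by
    rw [norm_pow]; exact pow_lt_one₀ (norm_nonneg _) hq (by norm_num)
  have h1Qi := h1Q hQn
  have hA1 : ∀ i, ‖(-q) * (q ^ 2) ^ i‖ < 1 := haQ (by simpa using hq) hQn.le
  set Q : ℂ := q ^ 2 with hQdef
  set Pinf : ℂ := ∏' i : ℕ, (1 - Q * Q ^ i) with hPdef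
  set A : ℂ := ∏' i : ℕ, (1 - (-q) * Q ^ i) with hAdef
  have hPne : Pinf ≠ 0 := tprod_ne hQn h1Qi
  set L : ℝ := ∑' i : ℕ, ‖Complex.log (1 - Q * Q ^ i)‖ with hLdef
  set B : ℝ := Real.exp L / (Real.exp (-L) * Real.exp (-L)) with hBdef
  have hBpos : 0 < B := by positivity
  set F : ℕ → ℤ → ℂ := fun N n =>
    (if n.natAbs ≤ N then gb Q (2 * N) ((↑N + n).toNat) else 0) * q ^ (n.natAbs ^ 2) with hFdef
  -- the uniform bound on the Gaussian binomials
  have hgb : ∀ m k : ℕ, ‖gb Q m k‖ ≤ B := by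
    intro m k
    by_cases h : k ≤ m
    · rw [gb, if_pos h, norm_div, norm_mul]
      refine div_le_div₀ (Real.exp_pos L).le (PF_bounds hQn h1Qi m).2 (by positivity) ?_
      exact mul_le_mul (PF_bounds hQn h1Qi k).1 (PF_bounds hQn h1Qi (m - k)).1
        (Real.exp_pos _).le (norm_nonneg _)
    · rw [gb, if_neg h]
      simpa using hBpos.le
  -- summable bound
  have hsumb : Summable (fun n : ℤ => B * ‖q‖ ^ n.natAbs) := by
    apply Summable.mul_left
    apply Summable.of_nat_of_neg <;>
      simpa using summable_geometric_of_lt_one (norm_nonneg q) hq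
  -- pointwise bound
  have h_bound : ∀ N : ℕ, ∀ n : ℤ, ‖F N n‖ ≤ B * ‖q‖ ^ n.natAbs := by
    intro N n
    rw [hFdef]
    simp only [norm_mul, norm_pow]
    have h1 : ‖if n.natAbs ≤ N then gb Q (2 * N) ((↑N + n).toNat) else 0‖ ≤ B := by
      split
      · exact hgb _ _
      · simpa using hBpos.le
    have h2 : ‖q‖ ^ n.natAbs ^ 2 ≤ ‖q‖ ^ n.natAbs :=
      pow_le_pow_of_le_one (norm_nonneg _) hq.le (Nat.le_self_pow (by norm_num) _)
    exact mul_le_mul h1 h2 (by positivity) hBpos.le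
  -- pointwise convergence
  have hab : ∀ n : ℤ, Tendsto (fun N => F N n) atTop (𝓝 (Pinf⁻¹ * q ^ (n.natAbs ^ 2))) := by
    intro n
    have t0 : Tendsto (fun m => PF Q Q m) atTop (𝓝 Pinf) := PF_tendsto hQn h1Qi
    have c1 : Tendsto (fun N : ℕ => 2 * N) atTop atTop :=
      tendsto_atTop_atTop.mpr fun b => ⟨b, fun a ha => by omega⟩
    have c2 : Tendsto (fun N : ℕ => ((N : ℤ) + n).toNat) atTop atTop :=
      tendsto_atTop_atTop.mpr fun b => ⟨b + n.natAbs, fun a ha => by omega⟩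
    have c3 : Tendsto (fun N : ℕ => ((N : ℤ) - n).toNat) atTop atTop :=
      tendsto_atTop_atTop.mpr fun b => ⟨b + n.natAbs, fun a ha => by omega⟩
    have tg : Tendsto (fun N : ℕ => PF Q Q (2 * N) /
        (PF Q Q (((N : ℤ) + n).toNat) * PF Q Q (((N : ℤ) - n).toNat)) * q ^ (n.natAbs ^ 2))
        atTop (𝓝 (Pinf / (Pinf * Pinf) * q ^ (n.natAbs ^ 2))) := by
      exact (((t0.comp c1).div ((t0.comp c2).mul (t0.comp c3))
        (mul_ne_zero hPne hPne))).mul_const _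
    have hval : Pinf / (Pinf * Pinf) * q ^ (n.natAbs ^ 2) = Pinf⁻¹ * q ^ (n.natAbs ^ 2) := by
      field_simp
    rw [← hval]
    apply tg.congr'
    filter_upwards [eventually_ge_atTop n.natAbs] with N hN
    rw [hFdef]
    simp only
    rw [if_pos hN, gb, if_pos (by omega),
      show 2 * N - ((N : ℤ) + n).toNat = ((N : ℤ) - n).toNat from by omega]
  -- evaluate the partial sums
  have hE1 : ∀ N : ℕ, ∑' n : ℤ, F N n = (∏ j ∈ range N, (1 + q ^ (2 * j + 1))) ^ 2 := by
    intro N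
    rw [tsum_eq_sum (s := Finset.Icc (-(N : ℤ)) N) (by
      intro n hn
      rw [Finset.mem_Icc] at hn
      rw [hFdef]
      simp only
      rw [if_neg (by omega), zero_mul])]
    rw [finite_jtp hq hq0 N]
    refine Finset.sum_nbij' (fun n => ((N : ℤ) + n).toNat) (fun k => (k : ℤ) - N)
      ?_ ?_ ?_ ?_ ?_
    · intro a ha
      rw [Finset.mem_Icc] at ha
      rw [Finset.mem_range]
      omega
    · intro a ha
      rw [Finset.mem_range] at ha
      rw [Finset.mem_Icc]
      omega
    · intro a ha
      rw [Finset.mem_Icc] at ha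
      omega
    · intro a ha
      rw [Finset.mem_range] at ha
      omega
    · intro a ha
      rw [Finset.mem_Icc] at ha
      rw [hFdef]
      dsimp only
      rw [if_pos (by omega),
        show (((((N : ℤ) + a).toNat : ℕ) : ℤ) - (N : ℤ)).natAbs = a.natAbs from by omega]
  -- two limits
  have hlim1 : Tendsto (fun N => ∑' n : ℤ, F N n) atTop
      (𝓝 (∑' n : ℤ, Pinf⁻¹ * q ^ (n.natAbs ^ 2))) :=
    tendsto_tsum_of_dominated_convergence hsumb hab (Eventually.of_forall h_bound)
  have hprodeq : ∀ N, ∏ j ∈ range N, (1 + q ^ (2 * j + 1)) = PF (-q) Q N := by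
    intro N
    rw [PF]
    refine Finset.prod_congr rfl fun j _ => ?_
    rw [hQdef]
    ring
  have hlim2 : Tendsto (fun N => (∏ j ∈ range N, (1 + q ^ (2 * j + 1))) ^ 2) atTop
      (𝓝 (A ^ 2)) := by
    have h := ((PF_tendsto hQn hA1).pow 2)
    exact h.congr fun N => by rw [hprodeq N]
  have hlim1' : Tendsto (fun N => (∏ j ∈ range N, (1 + q ^ (2 * j + 1))) ^ 2) atTop
      (𝓝 (∑' n : ℤ, Pinf⁻¹ * q ^ (n.natAbs ^ 2))) := hlim1.congr hE1
  have hkey : A ^ 2 = ∑' n : ℤ, Pinf⁻¹ * q ^ (n.natAbs ^ 2) :=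
    tendsto_nhds_unique hlim2 hlim1'
  rw [tsum_mul_left] at hkey
  rw [hkey, mul_comm (Pinf⁻¹ * _) Pinf, ← mul_assoc, mul_inv_cancel₀ hPne, one_mul]

theorem stmt_1 (q : ℂ) (hq : ‖q‖ < 1) :
    ∑' n : ℤ, q ^ (n.natAbs ^ 2) = qPoch (-q) (q ^ 2) ^ 2 * qPoch (q ^ 2) (q ^ 2) := by
  by_cases hq0 : q = 0
  · subst hq0
    have h1 : qPoch (-0 : ℂ) ((0:ℂ) ^ 2) = 1 := by
      simp [qPoch]
    have h2 : qPoch ((0:ℂ) ^ 2) ((0:ℂ) ^ 2) = 1 := by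
      simp [qPoch]
    rw [h1, h2]
    rw [tsum_eq_single (0 : ℤ) (fun n hn => by
      rw [zero_pow]
      simpa using hn)]
    norm_num
  · rw [qPoch, qPoch]
    exact main hq hq0
end

section
/- The identity ψ(q) := ∑_{n=0}^∞ q^{n(n+1)/2} = (q^2;q^2)_∞^2 / (q;q)_∞ for |q| < 1. -/
open scoped Topology

open Finset Filter Topology

namespace GaussAux

noncomputable def Qp (q : ℂ) (m : ℕ) : ℂ := ∏ k ∈ Finset.range m, (1 - q ^ (k + 1))

noncomputable def qb (q : ℂ) : ℕ → ℕ → ℂ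
  | _, 0 => 1
  | 0, _ + 1 => 0
  | N + 1, m + 1 => qb q N (m + 1) + q ^ (N - m) * qb q N m

@[simp] lemma qb_zero_right (q : ℂ) (N : ℕ) : qb q N 0 = 1 := by
  cases N <;> rfl

@[simp] lemma qb_zero_succ (q : ℂ) (m : ℕ) : qb q 0 (m + 1) = 0 := rfl

lemma qb_succ_succ (q : ℂ) (N m : ℕ) :
    qb q (N + 1) (m + 1) = qb q N (m + 1) + q ^ (N - m) * qb q N m := rfl

lemma qb_eq_zero (q : ℂ) {N m : ℕ} (h : N < m) : qb q N m = 0 := by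
  induction N generalizing m with
  | zero =>
    cases m with
    | zero => omega
    | succ m => rfl
  | succ N ih =>
    cases m with
    | zero => omega
    | succ m => rw [qb_succ_succ, ih (by omega), ih (by omega), mul_zero, add_zero]

@[simp] lemma Qp_zero (q : ℂ) : Qp q 0 = 1 := rfl

lemma Qp_succ (q : ℂ) (m : ℕ) : Qp q (m + 1) = Qp q m * (1 - q ^ (m + 1)) :=
  Finset.prod_range_succ _ _

lemma qb_mul_eq (q : ℂ) : ∀ N m : ℕ, m ≤ N →
    qb q N m * (Qp q m * Qp q (N - m)) = Qp q N := by
  intro N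
  induction N with
  | zero => intro m hm; interval_cases m; simp
  | succ N ih =>
    intro m hm
    cases m with
    | zero => simp
    | succ m =>
      rw [qb_succ_succ, add_mul]
      rcases Nat.lt_or_ge m N with hmN | hmN
      · have hA : N + 1 - (m + 1) = N - m := by omega
        have hB : Qp q (N - m) = Qp q (N - (m + 1)) * (1 - q ^ (N - m)) := by
          have h2 : N - m = (N - (m + 1)) + 1 := by omega
          rw [h2, Qp_succ]
        have hC : Qp q (m + 1) = Qp q m * (1 - q ^ (m + 1)) := Qp_succ q m
        have hD : Qp q (N + 1) = Qp q N * (1 - q ^ (N + 1)) := Qp_succ q N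
        have hE : q ^ (N - m) * q ^ (m + 1) = q ^ (N + 1) := by
          rw [← pow_add]; congr 1; omega
        have e1 := ih (m + 1) (by omega)
        have e2 := ih m (by omega)
        rw [hC] at e1
        rw [hB] at e2
        rw [hA, hB, hC, hD]
        linear_combination (1 - q ^ (N - m)) * e1 + q ^ (N - m) * (1 - q ^ (m + 1)) * e2
          - Qp q N * hE
      · have hm' : m = N := by omega
        subst hm'
        have e := ih m le_rfl
        rw [Nat.sub_self, Qp_zero, mul_one] at e
        rw [qb_eq_zero q (by omega), Nat.sub_self, Nat.sub_self, pow_zero, Qp_zero, mul_one,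
          Qp_succ, zero_mul, zero_add, one_mul]
        linear_combination (1 - q ^ (m + 1)) * e

end GaussAux

namespace GaussAux

lemma choose2_succ (i : ℕ) : (i + 1).choose 2 = i.choose 2 + i := by
  rw [Nat.choose_succ_succ i 1, Nat.choose_one_right, Nat.add_comm]

theorem qbinom (q z : ℂ) (N : ℕ) :
    ∏ k ∈ Finset.range N, (1 + z * q ^ k)
      = ∑ m ∈ Finset.range (N + 1), qb q N m * q ^ (m.choose 2) * z ^ m := by
  induction N with
  | zero => simp
  | succ N ih =>
    rw [Finset.prod_range_succ, ih]
    rw [Finset.sum_range_succ' (fun m => qb q (N+1) m * q ^ (m.choose 2) * z ^ m) (N+1)]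
    have hS : ∀ i ∈ Finset.range (N + 1),
        qb q (N+1) (i+1) * q ^ ((i+1).choose 2) * z ^ (i+1)
        = qb q N (i+1) * q ^ ((i+1).choose 2) * z ^ (i+1)
          + (qb q N i * q ^ (i.choose 2) * z ^ i) * (z * q ^ N) := by
      intro i hi
      rw [Finset.mem_range] at hi
      rw [qb_succ_succ, add_mul, add_mul]
      congr 1
      have : q ^ (N - i) * q ^ ((i+1).choose 2) = q ^ (i.choose 2) * q ^ N := by
        rw [← pow_add, ← pow_add, choose2_succ]
        congr 1
        omega
      calc q ^ (N - i) * qb q N i * q ^ ((i+1).choose 2) * z ^ (i+1)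
          = qb q N i * (q ^ (N - i) * q ^ ((i+1).choose 2)) * z ^ (i+1) := by ring
        _ = qb q N i * (q ^ (i.choose 2) * q ^ N) * z ^ (i+1) := by rw [this]
        _ = qb q N i * q ^ (i.choose 2) * z ^ i * (z * q ^ N) := by rw [pow_succ]; ring
    rw [Finset.sum_congr rfl hS, Finset.sum_add_distrib]
    have h1 : ∑ i ∈ Finset.range (N + 1),
        qb q N (i+1) * q ^ ((i+1).choose 2) * z ^ (i+1)
        = ∑ i ∈ Finset.range N, qb q N (i+1) * q ^ ((i+1).choose 2) * z ^ (i+1) := by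
      rw [Finset.sum_range_succ, qb_eq_zero q (by omega), zero_mul, zero_mul, add_zero]
    rw [h1]
    have h2 : ∑ m ∈ Finset.range (N + 1), qb q N m * q ^ (m.choose 2) * z ^ m
        = (∑ i ∈ Finset.range N, qb q N (i+1) * q ^ ((i+1).choose 2) * z ^ (i+1)) + 1 := by
      rw [Finset.sum_range_succ' (fun m => qb q N m * q ^ (m.choose 2) * z ^ m) N]
      simp
    rw [← Finset.sum_mul]
    simp only [qb_zero_right, pow_zero, mul_one, one_mul, Nat.choose_zero_succ]
    linear_combination h2

lemma id1 (n j : ℕ) (h : j ≤ n) :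
    (n + 1).choose 2 + (n - j).choose 2 = n * (n - j) + (j + 1).choose 2 := by
  obtain ⟨d, rfl⟩ : ∃ d, n = j + d := ⟨n - j, by omega⟩
  have hd : j + d - j = d := by omega
  rw [hd]
  induction d with
  | zero => simp
  | succ d ih =>
    have h1 : j + (d + 1) + 1 = (j + d + 1) + 1 := by omega
    have h2 : j + (d + 1) = (j + d) + 1 := by omega
    rw [h1, h2, choose2_succ (j + d + 1), choose2_succ d]
    have h3 : (j + d + 1) * (d + 1) = (j + d) * d + j + 2 * d + 1 := by ring
    have ih' := ih (by omega) (by omega)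
    omega

lemma two_choose2 (k : ℕ) : 2 * ((k + 1).choose 2) = (k + 1) * k := by
  induction k with
  | zero => rfl
  | succ k ih =>
    rw [choose2_succ (k + 1)]
    have : (k + 1 + 1) * (k + 1) = (k + 1) * k + 2 * (k + 1) := by ring
    omega

lemma id2 (n j : ℕ) :
    (n + 1).choose 2 + (n + 1 + j).choose 2 = n * (n + 1 + j) + (j + 1).choose 2 := by
  induction j with
  | zero =>
    have h1 := two_choose2 n
    have h2 : n * (n + 1) = (n + 1) * n := by ring
    have h3 : (0 + 1).choose 2 = 0 := rfl
    simp only [Nat.add_zero]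
    omega
  | succ j ih =>
    have h1 : n + 1 + (j + 1) = (n + 1 + j) + 1 := by omega
    rw [h1, choose2_succ (n + 1 + j), choose2_succ (j + 1)]
    have h2 : n * ((n + 1 + j) + 1) = n * (n + 1 + j) + n := by ring
    omega

lemma sum_succ_choose2 (n : ℕ) :
    ∑ j ∈ Finset.range n, (j + 1) = (n + 1).choose 2 := by
  induction n with
  | zero => rfl
  | succ n ih => rw [Finset.sum_range_succ, ih, choose2_succ (n + 1)]

lemma pow_helper (q : ℂ) (hq : q ≠ 0) {a c d : ℕ} (h : a = c + d) :
    q ^ a * (q⁻¹) ^ c = q ^ d := by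
  rw [h, pow_add, inv_pow]
  field_simp

lemma prod_side (q : ℂ) (hq : q ≠ 0) (n : ℕ) :
    q ^ ((n + 1).choose 2) * ∏ k ∈ Finset.range (2 * n), (1 + (q⁻¹) ^ n * q ^ k)
      = (∏ j ∈ Finset.range n, (1 + q ^ (j + 1))) * ∏ j ∈ Finset.range n, (1 + q ^ j) := by
  have h2n : 2 * n = n + n := by omega
  rw [h2n, Finset.prod_range_add]
  have hsecond : ∀ i ∈ Finset.range n, (1 + (q⁻¹) ^ n * q ^ (n + i)) = 1 + q ^ i := by
    intro i _
    rw [pow_add, ← mul_assoc, ← mul_pow, inv_mul_cancel₀ hq, one_pow, one_mul]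
  rw [Finset.prod_congr rfl hsecond]
  have hT : q ^ ((n + 1).choose 2) = ∏ k ∈ Finset.range n, q ^ (n - k) := by
    rw [Finset.prod_pow_eq_pow_sum]
    congr 1
    rw [← sum_succ_choose2 n]
    rw [← Finset.sum_range_reflect (fun k => n - k) n]
    refine Finset.sum_congr rfl fun j hj => ?_
    rw [Finset.mem_range] at hj
    omega
  rw [hT, ← mul_assoc, ← Finset.prod_mul_distrib]
  congr 1
  have : ∀ k ∈ Finset.range n, q ^ (n - k) * (1 + (q⁻¹) ^ n * q ^ k) = 1 + q ^ (n - k) := by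
    intro k hk
    rw [Finset.mem_range] at hk
    have hqk : q ^ (n - k) * ((q⁻¹) ^ n * q ^ k) = 1 := by
      have : q ^ (n - k) * q ^ k = q ^ n := by rw [← pow_add]; congr 1; omega
      calc q ^ (n - k) * ((q⁻¹) ^ n * q ^ k) = (q ^ (n - k) * q ^ k) * (q⁻¹) ^ n := by ring
        _ = q ^ n * (q⁻¹) ^ n := by rw [this]
        _ = 1 := by rw [← mul_pow, mul_inv_cancel₀ hq, one_pow]
    rw [mul_add, mul_one, hqk, add_comm]
  rw [Finset.prod_congr rfl this]
  rw [← Finset.prod_range_reflect (fun j => 1 + q ^ (j + 1)) n]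
  refine Finset.prod_congr rfl fun j hj => ?_
  rw [Finset.mem_range] at hj
  congr 2
  omega

lemma sum_side (q : ℂ) (hq : q ≠ 0) (n : ℕ) :
    q ^ ((n + 1).choose 2)
        * ∑ m ∈ Finset.range (2 * n + 1), qb q (2 * n) m * q ^ (m.choose 2) * ((q⁻¹) ^ n) ^ m
      = (∑ j ∈ Finset.range (n + 1), qb q (2 * n) (n - j) * q ^ ((j + 1).choose 2))
        + ∑ j ∈ Finset.range n, qb q (2 * n) (n + 1 + j) * q ^ ((j + 1).choose 2) := by
  rw [Finset.mul_sum]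
  have hterm : ∀ m : ℕ, q ^ ((n + 1).choose 2) * (qb q (2 * n) m * q ^ (m.choose 2) * ((q⁻¹) ^ n) ^ m)
      = qb q (2 * n) m * (q ^ ((n + 1).choose 2 + m.choose 2) * (q⁻¹) ^ (n * m)) := by
    intro m
    rw [← pow_mul, pow_add]
    ring
  simp only [hterm]
  have h2n1 : 2 * n + 1 = (n + 1) + n := by omega
  rw [h2n1, Finset.sum_range_add]
  congr 1
  · rw [← Finset.sum_range_reflect
      (fun m => qb q (2 * n) m * (q ^ ((n + 1).choose 2 + m.choose 2) * (q⁻¹) ^ (n * m))) (n + 1)]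
    refine Finset.sum_congr rfl fun j hj => ?_
    rw [Finset.mem_range] at hj
    have hj' : j ≤ n := by omega
    have hidx : n + 1 - 1 - j = n - j := by omega
    rw [hidx, pow_helper q hq (id1 n j hj')]
  · refine Finset.sum_congr rfl fun j hj => ?_
    rw [pow_helper q hq (id2 n j)]

theorem gauss_finite (q : ℂ) (hq : q ≠ 0) (n : ℕ) :
    (∑ j ∈ Finset.range (n + 1), qb q (2 * n) (n - j) * q ^ ((j + 1).choose 2))
      + ∑ j ∈ Finset.range n, qb q (2 * n) (n + 1 + j) * q ^ ((j + 1).choose 2)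
    = (∏ j ∈ Finset.range n, (1 + q ^ (j + 1))) * ∏ j ∈ Finset.range n, (1 + q ^ j) := by
  rw [← sum_side q hq n, ← prod_side q hq n, qbinom q ((q⁻¹) ^ n) (2 * n)]

lemma factor_ne_zero {a q : ℂ} (ha : ‖a‖ < 1) (hq : ‖q‖ ≤ 1) (n : ℕ) :
    1 - a * q ^ n ≠ 0 := by
  intro h
  have h1 : a * q ^ n = 1 := by linear_combination -h
  have : ‖a * q ^ n‖ < 1 := by
    rw [norm_mul, norm_pow]
    calc ‖a‖ * ‖q‖ ^ n ≤ ‖a‖ * 1 := by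
          gcongr
          exact pow_le_one₀ (norm_nonneg q) hq
      _ < 1 := by simpa using ha
  rw [h1] at this
  simp at this

lemma log_summable {a q : ℂ} (ha : ‖a‖ < 1) (hq : ‖q‖ < 1) :
    Summable fun n : ℕ => Complex.log (1 - a * q ^ n) := by
  have hg : Summable (fun n : ℕ => 3 / 2 * (‖a‖ * ‖q‖ ^ n)) :=
    ((summable_geometric_of_lt_one (norm_nonneg q) hq).mul_left ‖a‖).mul_left (3 / 2)
  refine Summable.of_norm_bounded_eventually_nat hg ?_
  · have hto : Filter.Tendsto (fun n : ℕ => ‖a‖ * ‖q‖ ^ n) Filter.atTop (𝓝 0) := by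
      simpa using (tendsto_pow_atTop_nhds_zero_of_lt_one (norm_nonneg q) hq).const_mul ‖a‖
    filter_upwards [hto.eventually_le_const (by norm_num : (0:ℝ) < 1/2)] with n hn
    have hnorm : ‖-(a * q ^ n)‖ ≤ 1 / 2 := by
      rw [norm_neg, norm_mul, norm_pow]; exact hn
    have := Complex.norm_log_one_add_half_le_self hnorm
    rw [show (1 : ℂ) + -(a * q ^ n) = 1 - a * q ^ n by ring] at this
    calc ‖Complex.log (1 - a * q ^ n)‖ ≤ 3 / 2 * ‖-(a * q ^ n)‖ := this
      _ = 3 / 2 * (‖a‖ * ‖q‖ ^ n) := by rw [norm_neg, norm_mul, norm_pow]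

lemma hasProd_factor {a q : ℂ} (ha : ‖a‖ < 1) (hq : ‖q‖ < 1) :
    HasProd (fun n : ℕ => 1 - a * q ^ n) (∏' n : ℕ, (1 - a * q ^ n)) :=
  (Complex.multipliable_of_summable_log (log_summable ha hq)).hasProd

lemma multipliable_factor {a q : ℂ} (ha : ‖a‖ < 1) (hq : ‖q‖ < 1) :
    Multipliable fun n : ℕ => 1 - a * q ^ n :=
  ⟨_, hasProd_factor ha hq⟩

lemma qPoch_ne_zero {a q : ℂ} (ha : ‖a‖ < 1) (hq : ‖q‖ < 1) : qPoch a q ≠ 0 := by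
  have := Complex.cexp_tsum_eq_tprod (f := fun n => 1 - a * q ^ n)
    (fun n => factor_ne_zero ha hq.le n) (log_summable ha hq)
  rw [qPoch, ← this]
  exact Complex.exp_ne_zero _

lemma tendsto_partial_prod {a q : ℂ} (ha : ‖a‖ < 1) (hq : ‖q‖ < 1) :
    Filter.Tendsto (fun m => ∏ k ∈ Finset.range m, (1 - a * q ^ k))
      Filter.atTop (𝓝 (qPoch a q)) :=
  HasProd.tendsto_prod_nat (multipliable_factor ha hq).hasProd

lemma exp_le_one_sub {x r : ℝ} (hx0 : 0 ≤ x) (hxr : x ≤ r) (hr : r < 1) :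
    Real.exp (-(x / (1 - r))) ≤ 1 - x := by
  have h1r : (0:ℝ) < 1 - r := by linarith
  set s := x / (1 - r) with hs
  have hs0 : 0 ≤ s := div_nonneg hx0 h1r.le
  have hxx : x = s * (1 - r) := by rw [hs, div_mul_cancel₀ _ h1r.ne']
  have hexp : 1 + s ≤ Real.exp s := by linarith [Real.add_one_le_exp s]
  have hkey : 1 ≤ (1 - x) * (1 + s) := by nlinarith [mul_nonneg hs0 (sub_nonneg.2 hxr)]
  have h1x : 0 < 1 - x := by linarith
  have : 1 ≤ (1 - x) * Real.exp s := by nlinarith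
  rw [Real.exp_neg]
  have hpos := Real.exp_pos s
  have hinv : (Real.exp s)⁻¹ * Real.exp s = 1 := inv_mul_cancel₀ (ne_of_gt hpos)
  nlinarith [this, hpos, hinv]

variable {q : ℂ} (hq : ‖q‖ < 1)

lemma Qp_factor_norm_le (k : ℕ) : ‖1 - q ^ (k + 1)‖ ≤ 1 + ‖q‖ ^ (k + 1) := by
  calc ‖1 - q ^ (k + 1)‖ ≤ ‖(1:ℂ)‖ + ‖q ^ (k + 1)‖ := norm_sub_le _ _
    _ = 1 + ‖q‖ ^ (k + 1) := by rw [norm_one, norm_pow]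

include hq in
lemma sum_pow_le (m : ℕ) : ∑ k ∈ Finset.range m, ‖q‖ ^ (k + 1) ≤ ‖q‖ / (1 - ‖q‖) := by
  have hsum : Summable (fun k : ℕ => ‖q‖ ^ (k + 1)) :=
    ((summable_geometric_of_lt_one (norm_nonneg q) hq).mul_left ‖q‖).congr
      (fun k => by rw [pow_succ'])
  calc ∑ k ∈ Finset.range m, ‖q‖ ^ (k + 1)
      ≤ ∑' k : ℕ, ‖q‖ ^ (k + 1) :=
        Summable.sum_le_tsum _ (fun k _ => pow_nonneg (norm_nonneg q) _) hsum
    _ = ‖q‖ * ∑' k : ℕ, ‖q‖ ^ k := by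
        rw [← tsum_mul_left]
        exact tsum_congr fun k => by rw [pow_succ']
    _ = ‖q‖ * (1 - ‖q‖)⁻¹ := by rw [tsum_geometric_of_lt_one (norm_nonneg q) hq]
    _ = ‖q‖ / (1 - ‖q‖) := by rw [div_eq_mul_inv]

include hq in
lemma Qp_norm_le (m : ℕ) : ‖Qp q m‖ ≤ Real.exp (‖q‖ / (1 - ‖q‖)) := by
  calc ‖Qp q m‖ ≤ ∏ k ∈ Finset.range m, (1 + ‖q‖ ^ (k + 1)) := by
        rw [Qp, norm_prod]
        exact Finset.prod_le_prod (fun k _ => norm_nonneg _) (fun k _ => Qp_factor_norm_le k)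
    _ ≤ ∏ k ∈ Finset.range m, Real.exp (‖q‖ ^ (k + 1)) := by
        refine Finset.prod_le_prod (fun k _ => by positivity) (fun k _ => ?_)
        linarith [Real.add_one_le_exp (‖q‖ ^ (k + 1))]
    _ = Real.exp (∑ k ∈ Finset.range m, ‖q‖ ^ (k + 1)) := by rw [Real.exp_sum]
    _ ≤ Real.exp (‖q‖ / (1 - ‖q‖)) := Real.exp_le_exp.2 (sum_pow_le hq m)

include hq in
lemma Qp_norm_ge (m : ℕ) :
    Real.exp (-(‖q‖ / (1 - ‖q‖) / (1 - ‖q‖))) ≤ ‖Qp q m‖ := by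
  have h1r : (0:ℝ) < 1 - ‖q‖ := by linarith
  have hfac : ∀ k : ℕ, Real.exp (-(‖q‖ ^ (k + 1) / (1 - ‖q‖))) ≤ ‖1 - q ^ (k + 1)‖ := by
    intro k
    have hle : ‖q‖ ^ (k + 1) ≤ ‖q‖ := by
      calc ‖q‖ ^ (k + 1) ≤ ‖q‖ ^ 1 :=
            pow_le_pow_of_le_one (norm_nonneg q) hq.le (by omega)
        _ = ‖q‖ := pow_one _
    refine (exp_le_one_sub (pow_nonneg (norm_nonneg q) _) hle hq).trans ?_
    calc 1 - ‖q‖ ^ (k + 1) = ‖(1:ℂ)‖ - ‖q ^ (k + 1)‖ := by rw [norm_one, norm_pow]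
      _ ≤ ‖1 - q ^ (k + 1)‖ := norm_sub_norm_le _ _
  calc Real.exp (-(‖q‖ / (1 - ‖q‖) / (1 - ‖q‖)))
      ≤ Real.exp (-((∑ k ∈ Finset.range m, ‖q‖ ^ (k + 1)) / (1 - ‖q‖))) := by
        refine Real.exp_le_exp.2 (neg_le_neg ?_)
        gcongr
        exact sum_pow_le hq m
    _ = ∏ k ∈ Finset.range m, Real.exp (-(‖q‖ ^ (k + 1) / (1 - ‖q‖))) := by
        rw [← Real.exp_sum]
        congr 1
        rw [Finset.sum_neg_distrib, Finset.sum_div]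
    _ ≤ ∏ k ∈ Finset.range m, ‖1 - q ^ (k + 1)‖ :=
        Finset.prod_le_prod (fun k _ => (Real.exp_pos _).le) (fun k _ => hfac k)
    _ = ‖Qp q m‖ := by rw [Qp, ← norm_prod]

include hq in
lemma Qp_factor_ne (k : ℕ) : (1 : ℂ) - q ^ (k + 1) ≠ 0 := by
  have := factor_ne_zero (a := q) hq hq.le k
  rwa [← pow_succ'] at this

include hq in
lemma Qp_ne_zero (m : ℕ) : Qp q m ≠ 0 :=
  Finset.prod_ne_zero_iff.2 fun k _ => Qp_factor_ne hq k

include hq in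
lemma qb_eq_div {N m : ℕ} (h : m ≤ N) :
    qb q N m = Qp q N / (Qp q m * Qp q (N - m)) := by
  rw [eq_div_iff (mul_ne_zero (Qp_ne_zero hq m) (Qp_ne_zero hq (N - m)))]
  exact qb_mul_eq q N m h

/-- uniform bound for Gaussian binomials -/
noncomputable def bigB (q : ℂ) : ℝ :=
  Real.exp (‖q‖ / (1 - ‖q‖)) /
    (Real.exp (-(‖q‖ / (1 - ‖q‖) / (1 - ‖q‖))) * Real.exp (-(‖q‖ / (1 - ‖q‖) / (1 - ‖q‖))))

include hq in
lemma qb_norm_le (N m : ℕ) : ‖qb q N m‖ ≤ bigB q := by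
  rcases le_or_gt m N with h | h
  · rw [qb_eq_div hq h, norm_div, norm_mul, bigB]
    have hL := Real.exp_pos (-(‖q‖ / (1 - ‖q‖) / (1 - ‖q‖)))
    exact div_le_div₀ (Real.exp_pos _).le (Qp_norm_le hq N) (mul_pos hL hL)
      (mul_le_mul (Qp_norm_ge hq m) (Qp_norm_ge hq (N - m)) hL.le (norm_nonneg _))
  · rw [qb_eq_zero q h, norm_zero, bigB]
    positivity

lemma nat_tendsto (f : ℕ → ℕ) (h : ∀ n, n ≤ f n) :
    Filter.Tendsto f Filter.atTop Filter.atTop :=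
  Filter.tendsto_atTop_mono h Filter.tendsto_id

include hq in
lemma tendsto_Qp : Filter.Tendsto (Qp q) Filter.atTop (𝓝 (qPoch q q)) := by
  have := tendsto_partial_prod (a := q) hq hq
  refine this.congr fun m => ?_
  exact Finset.prod_congr rfl fun k _ => by rw [← pow_succ']

include hq in
lemma tendsto_qb_sub (j : ℕ) :
    Filter.Tendsto (fun n => qb q (2 * n) (n - j)) Filter.atTop (𝓝 (qPoch q q)⁻¹) := by
  have hP : qPoch q q ≠ 0 := qPoch_ne_zero hq hq
  have h1 : Filter.Tendsto (fun n : ℕ => Qp q (2 * n)) Filter.atTop (𝓝 (qPoch q q)) :=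
    (tendsto_Qp hq).comp (nat_tendsto _ (fun n => by omega))
  have h2 : Filter.Tendsto (fun n : ℕ => Qp q (n - j)) Filter.atTop (𝓝 (qPoch q q)) :=
    (tendsto_Qp hq).comp ((Filter.tendsto_sub_atTop_nat j))
  have h3 : Filter.Tendsto (fun n : ℕ => Qp q (n + j)) Filter.atTop (𝓝 (qPoch q q)) :=
    (tendsto_Qp hq).comp (nat_tendsto _ (fun n => by omega))
  have hdiv := h1.div (h2.mul h3) (mul_ne_zero hP hP)
  have heq : (fun n : ℕ => Qp q (2 * n) / (Qp q (n - j) * Qp q (n + j)))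
      =ᶠ[Filter.atTop] fun n => qb q (2 * n) (n - j) := by
    filter_upwards [Filter.eventually_ge_atTop j] with n hn
    rw [qb_eq_div hq (by omega)]
    have : 2 * n - (n - j) = n + j := by omega
    rw [this]
  have := hdiv.congr' heq
  have hval : qPoch q q / (qPoch q q * qPoch q q) = (qPoch q q)⁻¹ := by
    field_simp
  rwa [hval] at this

include hq in
lemma tendsto_qb_add (j : ℕ) :
    Filter.Tendsto (fun n => qb q (2 * n) (n + 1 + j)) Filter.atTop (𝓝 (qPoch q q)⁻¹) := by
  have hP : qPoch q q ≠ 0 := qPoch_ne_zero hq hq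
  have h1 : Filter.Tendsto (fun n : ℕ => Qp q (2 * n)) Filter.atTop (𝓝 (qPoch q q)) :=
    (tendsto_Qp hq).comp (nat_tendsto _ (fun n => by omega))
  have h2 : Filter.Tendsto (fun n : ℕ => Qp q (n + 1 + j)) Filter.atTop (𝓝 (qPoch q q)) :=
    (tendsto_Qp hq).comp (nat_tendsto _ (fun n => by omega))
  have h3 : Filter.Tendsto (fun n : ℕ => Qp q (n - (j + 1))) Filter.atTop (𝓝 (qPoch q q)) :=
    (tendsto_Qp hq).comp ((Filter.tendsto_sub_atTop_nat (j + 1)))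
  have hdiv := h1.div (h2.mul h3) (mul_ne_zero hP hP)
  have heq : (fun n : ℕ => Qp q (2 * n) / (Qp q (n + 1 + j) * Qp q (n - (j + 1))))
      =ᶠ[Filter.atTop] fun n => qb q (2 * n) (n + 1 + j) := by
    filter_upwards [Filter.eventually_ge_atTop (j + 1)] with n hn
    rcases Nat.lt_or_ge (2 * n) (n + 1 + j) with hc | hc
    · omega
    rw [qb_eq_div hq hc]
    have : 2 * n - (n + 1 + j) = n - (j + 1) := by omega
    rw [this]
  have := hdiv.congr' heq
  have hval : qPoch q q / (qPoch q q * qPoch q q) = (qPoch q q)⁻¹ := by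
    field_simp
  rwa [hval] at this

lemma le_choose2 (j : ℕ) : j ≤ (j + 1).choose 2 := by
  cases j with
  | zero => simp
  | succ j => rw [choose2_succ (j + 1)]; omega

include hq in
lemma summable_bound : Summable (fun j : ℕ => bigB q * ‖q‖ ^ j) :=
  (summable_geometric_of_lt_one (norm_nonneg q) hq).mul_left _

include hq in
lemma pow_T_le (j : ℕ) : ‖q ^ ((j + 1).choose 2)‖ ≤ ‖q‖ ^ j := by
  rw [norm_pow]
  exact pow_le_pow_of_le_one (norm_nonneg q) hq.le (le_choose2 j)

include hq in
lemma tendsto_sum1 :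
    Filter.Tendsto
      (fun n => ∑ j ∈ Finset.range (n + 1), qb q (2 * n) (n - j) * q ^ ((j + 1).choose 2))
      Filter.atTop (𝓝 ((qPoch q q)⁻¹ * ∑' j : ℕ, q ^ ((j + 1).choose 2))) := by
  set f : ℕ → ℕ → ℂ :=
    fun n j => if j ≤ n then qb q (2 * n) (n - j) * q ^ ((j + 1).choose 2) else 0 with hf
  have heq : ∀ n, ∑ j ∈ Finset.range (n + 1), qb q (2 * n) (n - j) * q ^ ((j + 1).choose 2)
      = ∑' j : ℕ, f n j := by
    intro n
    rw [tsum_eq_sum (s := Finset.range (n + 1))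
      (fun j hj => by simp only [hf]; simp only [Finset.mem_range] at hj; rw [if_neg (by omega)])]
    refine Finset.sum_congr rfl fun j hj => ?_
    rw [Finset.mem_range] at hj
    simp only [hf]; rw [if_pos (by omega)]
  have hlim : ∀ j : ℕ, Filter.Tendsto (fun n => f n j) Filter.atTop
      (𝓝 ((qPoch q q)⁻¹ * q ^ ((j + 1).choose 2))) := by
    intro j
    refine (((tendsto_qb_sub hq j).mul_const (q ^ ((j + 1).choose 2))).congr' ?_)
    filter_upwards [Filter.eventually_ge_atTop j] with n hn
    simp only [hf]; rw [if_pos hn]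
  have hbd : ∀ n j, ‖f n j‖ ≤ bigB q * ‖q‖ ^ j := by
    intro n j
    simp only [hf]
    by_cases h : j ≤ n
    · rw [if_pos h, norm_mul]
      exact mul_le_mul (qb_norm_le hq _ _) (pow_T_le hq j) (norm_nonneg _)
        (le_trans (norm_nonneg _) (qb_norm_le hq 0 0))
    · rw [if_neg h, norm_zero]
      have hB0 : (0:ℝ) ≤ bigB q := by rw [bigB]; positivity
      exact mul_nonneg hB0 (pow_nonneg (norm_nonneg q) j)
  have := tendsto_tsum_of_dominated_convergence (summable_bound hq) hlim
    (Filter.Eventually.of_forall fun n => hbd n)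
  rw [tsum_mul_left] at this
  exact Filter.Tendsto.congr (fun n => (heq n).symm) this

include hq in
lemma tendsto_sum2 :
    Filter.Tendsto
      (fun n => ∑ j ∈ Finset.range n, qb q (2 * n) (n + 1 + j) * q ^ ((j + 1).choose 2))
      Filter.atTop (𝓝 ((qPoch q q)⁻¹ * ∑' j : ℕ, q ^ ((j + 1).choose 2))) := by
  set f : ℕ → ℕ → ℂ :=
    fun n j => if j < n then qb q (2 * n) (n + 1 + j) * q ^ ((j + 1).choose 2) else 0 with hf
  have heq : ∀ n, ∑ j ∈ Finset.range n, qb q (2 * n) (n + 1 + j) * q ^ ((j + 1).choose 2)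
      = ∑' j : ℕ, f n j := by
    intro n
    rw [tsum_eq_sum (s := Finset.range n)
      (fun j hj => by simp only [hf]; simp only [Finset.mem_range] at hj; rw [if_neg (by omega)])]
    refine Finset.sum_congr rfl fun j hj => ?_
    rw [Finset.mem_range] at hj
    simp only [hf]; rw [if_pos (by omega)]
  have hlim : ∀ j : ℕ, Filter.Tendsto (fun n => f n j) Filter.atTop
      (𝓝 ((qPoch q q)⁻¹ * q ^ ((j + 1).choose 2))) := by
    intro j
    refine (((tendsto_qb_add hq j).mul_const (q ^ ((j + 1).choose 2))).congr' ?_)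
    filter_upwards [Filter.eventually_gt_atTop j] with n hn
    simp only [hf]; rw [if_pos hn]
  have hbd : ∀ n j, ‖f n j‖ ≤ bigB q * ‖q‖ ^ j := by
    intro n j
    simp only [hf]
    by_cases h : j < n
    · rw [if_pos h, norm_mul]
      exact mul_le_mul (qb_norm_le hq _ _) (pow_T_le hq j) (norm_nonneg _)
        (le_trans (norm_nonneg _) (qb_norm_le hq 0 0))
    · rw [if_neg h, norm_zero]
      have hB0 : (0:ℝ) ≤ bigB q := by rw [bigB]; positivity
      exact mul_nonneg hB0 (pow_nonneg (norm_nonneg q) j)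
  have := tendsto_tsum_of_dominated_convergence (summable_bound hq) hlim
    (Filter.Eventually.of_forall fun n => hbd n)
  rw [tsum_mul_left] at this
  exact Filter.Tendsto.congr (fun n => (heq n).symm) this

include hq in
lemma tendsto_prod1 :
    Filter.Tendsto (fun n => ∏ j ∈ Finset.range n, (1 + q ^ (j + 1)))
      Filter.atTop (𝓝 (qPoch (-q) q)) := by
  have hnq : ‖-q‖ < 1 := by rwa [norm_neg]
  refine (tendsto_partial_prod hnq hq).congr fun m => ?_
  refine Finset.prod_congr rfl fun k _ => ?_
  rw [pow_succ']
  ring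

include hq in
lemma tendsto_prod2 :
    Filter.Tendsto (fun n => ∏ j ∈ Finset.range n, (1 + q ^ j))
      Filter.atTop (𝓝 (2 * qPoch (-q) q)) := by
  rw [← Filter.tendsto_add_atTop_iff_nat 1]
  have : (fun n => ∏ j ∈ Finset.range (n + 1), (1 + q ^ j))
      = fun n => (∏ j ∈ Finset.range n, (1 + q ^ (j + 1))) * 2 := by
    funext n
    rw [Finset.prod_range_succ' (fun j => 1 + q ^ j) n]
    norm_num
  rw [this]
  have := (tendsto_prod1 hq).mul_const (2 : ℂ)
  rw [mul_comm] at this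
  exact this

include hq in
theorem gauss_main (hq0 : q ≠ 0) :
    ∑' j : ℕ, q ^ ((j + 1).choose 2) = qPoch q q * (qPoch (-q) q) ^ 2 := by
  have hP : qPoch q q ≠ 0 := qPoch_ne_zero hq hq
  have hA : Filter.Tendsto
      (fun n => (∑ j ∈ Finset.range (n + 1), qb q (2 * n) (n - j) * q ^ ((j + 1).choose 2))
        + ∑ j ∈ Finset.range n, qb q (2 * n) (n + 1 + j) * q ^ ((j + 1).choose 2))
      Filter.atTop (𝓝 ((qPoch q q)⁻¹ * ∑' j : ℕ, q ^ ((j + 1).choose 2)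
        + (qPoch q q)⁻¹ * ∑' j : ℕ, q ^ ((j + 1).choose 2))) :=
    (tendsto_sum1 hq).add (tendsto_sum2 hq)
  have hB : Filter.Tendsto
      (fun n => (∏ j ∈ Finset.range n, (1 + q ^ (j + 1))) * ∏ j ∈ Finset.range n, (1 + q ^ j))
      Filter.atTop (𝓝 (qPoch (-q) q * (2 * qPoch (-q) q))) :=
    (tendsto_prod1 hq).mul (tendsto_prod2 hq)
  have hEq : (fun n => (∑ j ∈ Finset.range (n + 1), qb q (2 * n) (n - j) * q ^ ((j + 1).choose 2))
        + ∑ j ∈ Finset.range n, qb q (2 * n) (n + 1 + j) * q ^ ((j + 1).choose 2))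
      = fun n => (∏ j ∈ Finset.range n, (1 + q ^ (j + 1))) * ∏ j ∈ Finset.range n, (1 + q ^ j) :=
    funext fun n => gauss_finite q hq0 n
  rw [hEq] at hA
  have hu := tendsto_nhds_unique hA hB
  have h2 : (2 : ℂ) ≠ 0 := two_ne_zero
  field_simp at hu
  linear_combination hu / 2

end GaussAux

open GaussAux in
private theorem stmt_2_aux (q : ℂ) (hq : ‖q‖ < 1) :
    ∑' n : ℕ, q ^ (n * (n + 1) / 2) = qPoch (q ^ 2) (q ^ 2) ^ 2 / qPoch q q := by
  rcases eq_or_ne q 0 with rfl | hq0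
  · have hL : ∑' n : ℕ, (0:ℂ) ^ (n * (n + 1) / 2) = 1 := by
      rw [tsum_eq_single 0 ?_]
      · norm_num
      · intro n hn
        have hpos : n * (n + 1) / 2 ≠ 0 := by
          have h2 : 2 ≤ n * (n + 1) := by nlinarith [Nat.pos_of_ne_zero hn]
          omega
        exact zero_pow hpos
    have hR : qPoch 0 0 = 1 := by
      rw [qPoch]
      norm_num
    rw [hL]
    norm_num [hR]
  · have hq' : ‖q‖ < 1 := by exact hq
    have hP : qPoch q q ≠ 0 := qPoch_ne_zero hq' hq'
    have hL : ∑' n : ℕ, q ^ (n * (n + 1) / 2) = ∑' j : ℕ, q ^ ((j + 1).choose 2) := by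
      refine tsum_congr fun n => ?_
      rw [Nat.choose_two_right]
      congr 1
      rw [Nat.add_sub_cancel, Nat.mul_comm]
    have hsplit : qPoch (q ^ 2) (q ^ 2) = qPoch q q * qPoch (-q) q := by
      rw [qPoch, qPoch, qPoch]
      rw [← Multipliable.tprod_mul (multipliable_factor hq' hq')
        (multipliable_factor (by rwa [norm_neg]) hq')]
      refine tprod_congr fun n => ?_
      have h1 : (q ^ 2) * (q ^ 2) ^ n = (q * q ^ n) * (q * q ^ n) := by ring
      linear_combination -h1
    rw [hL, gauss_main hq' hq0, hsplit]
    field_simp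

theorem stmt_2 (q : ℂ) (hq : ‖q‖ < 1) :
    ∑' n : ℕ, q ^ (n * (n + 1) / 2) = qPoch (q ^ 2) (q ^ 2) ^ 2 / qPoch q q :=
  stmt_2_aux q hq
end

section
/- Euler's pentagonal-type product formula: (q;q)_∞ = ∑_{n=-∞}^∞ (-1)^n q^{n(3n-1)/2} for |q| < 1. -/
open scoped Topology

open Finset

namespace PNT

/-- weight of a finset of indices: the corresponding partition's size. -/
def w (T : Finset ℕ) : ℕ := ∑ i ∈ T, (i + 1)

noncomputable def g (q : ℂ) (T : Finset ℕ) : ℂ := ∏ i ∈ T, (-(q * q ^ i))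

lemma g_eq (q : ℂ) (T : Finset ℕ) : g q T = (-1) ^ T.card * q ^ w T := by
  have : ∀ i ∈ T, (-(q * q ^ i)) = (-1) * q ^ (i + 1) := by
    intro i _; rw [pow_succ']; ring
  rw [g, Finset.prod_congr rfl this, Finset.prod_mul_distrib, Finset.prod_const,
    Finset.prod_pow_eq_pow_sum, w]

lemma kk_ex (T : Finset ℕ) (h : T.Nonempty) : ∃ j, Finset.Ico j (T.max' h + 1) ⊆ T := by
  refine ⟨T.max' h, ?_⟩
  rw [Nat.Ico_succ_singleton, Finset.singleton_subset_iff]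
  exact T.max'_mem h

/-- length-maximal top staircase: `kk` is the least `j` such that all of `[j, max]` is in `T`. -/
noncomputable def kk (T : Finset ℕ) (h : T.Nonempty) : ℕ := Nat.find (kk_ex T h)

lemma kk_spec (T : Finset ℕ) (h : T.Nonempty) : Finset.Ico (kk T h) (T.max' h + 1) ⊆ T :=
  Nat.find_spec (kk_ex T h)

lemma kk_le (T : Finset ℕ) (h : T.Nonempty) {j : ℕ} (hj : Finset.Ico j (T.max' h + 1) ⊆ T) :
    kk T h ≤ j := Nat.find_le hj

lemma kk_le_max (T : Finset ℕ) (h : T.Nonempty) : kk T h ≤ T.max' h :=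
  kk_le T h (by rw [Nat.Ico_succ_singleton, Finset.singleton_subset_iff]; exact T.max'_mem h)

lemma kk_mem (T : Finset ℕ) (h : T.Nonempty) {j : ℕ} (h1 : kk T h ≤ j) (h2 : j ≤ T.max' h) :
    j ∈ T := kk_spec T h (by rw [Finset.mem_Ico]; omega)

lemma kk_gap (T : Finset ℕ) (h : T.Nonempty) (hk : 1 ≤ kk T h) : kk T h - 1 ∉ T := by
  intro hmem
  have hlt : kk T h - 1 < kk T h := by omega
  have hmin := Nat.find_min (kk_ex T h) hlt
  apply hmin
  intro j hj
  rw [Finset.mem_Ico] at hj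
  rcases eq_or_lt_of_le hj.1 with h1 | h1
  · exact h1 ▸ hmem
  · exact kk_mem T h (by omega) (by omega)

lemma kk_ge (T : Finset ℕ) (h : T.Nonempty) {j : ℕ} (hj : j - 1 ∉ T) (hj1 : 1 ≤ j)
    (hj2 : j - 1 ≤ T.max' h) : j ≤ kk T h := by
  by_contra hc
  exact hj (kk_mem T h (by omega) hj2)

/-- the pentagonal staircases, indexed by `ℤ`. -/
def stair (n : ℤ) : Finset ℕ :=
  if 0 < n then Finset.Ico (n.toNat - 1) (2 * n.toNat - 1) else Finset.Ico (-n).toNat (2 * (-n).toNat)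

lemma stair_zero : stair 0 = ∅ := by simp [stair]

-- stats of an interval
lemma Ico_max' (a b : ℕ) (hab : a < b) (h : (Finset.Ico a b).Nonempty) :
    (Finset.Ico a b).max' h = b - 1 := by
  apply le_antisymm
  · exact Finset.max'_le _ _ _ (fun y hy => by rw [Finset.mem_Ico] at hy; omega)
  · exact Finset.le_max' _ _ (by rw [Finset.mem_Ico]; omega)

lemma Ico_min' (a b : ℕ) (hab : a < b) (h : (Finset.Ico a b).Nonempty) :
    (Finset.Ico a b).min' h = a := by
  apply le_antisymm
  · exact Finset.min'_le _ _ (by rw [Finset.mem_Ico]; omega)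
  · exact Finset.le_min' _ _ _ (fun y hy => by rw [Finset.mem_Ico] at hy; omega)

lemma Ico_kk (a b : ℕ) (hab : a < b) (h : (Finset.Ico a b).Nonempty) :
    kk (Finset.Ico a b) h = a := by
  have hmax := Ico_max' a b hab h
  apply le_antisymm
  · apply kk_le
    rw [hmax]
    intro x hx; rw [Finset.mem_Ico] at *; omega
  · rcases Nat.eq_zero_or_pos a with h0 | h0
    · omega
    · apply kk_ge
      · rw [Finset.mem_Ico]; omega
      · omega
      · omega

end PNT

section Work2
set_option linter.unusedSectionVars false
open Finset
namespace PNT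

lemma max'_eq (S : Finset ℕ) (h : S.Nonempty) (a : ℕ) (ha : a ∈ S) (hb : ∀ b ∈ S, b ≤ a) :
    S.max' h = a := le_antisymm (Finset.max'_le _ _ _ hb) (Finset.le_max' _ _ ha)

lemma min'_eq (S : Finset ℕ) (h : S.Nonempty) (a : ℕ) (ha : a ∈ S) (hb : ∀ b ∈ S, a ≤ b) :
    S.min' h = a := le_antisymm (Finset.min'_le _ _ ha) (Finset.le_min' _ _ _ hb)

/-- Franklin's move when the smallest part is at most the staircase length. -/
def opA (T : Finset ℕ) (h : T.Nonempty) : Finset ℕ :=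
  insert (T.max' h + 1) ((T.erase (T.min' h)).erase (T.max' h - T.min' h))

/-- Franklin's move when the smallest part exceeds the staircase length. -/
noncomputable def opB (T : Finset ℕ) (h : T.Nonempty) : Finset ℕ :=
  insert (T.max' h - kk T h) (insert (kk T h - 1) (T.erase (T.max' h)))

section CaseA

variable {T : Finset ℕ} (h : T.Nonempty)
  (hA : T.min' h + kk T h ≤ T.max' h) (hfix : 2 * T.min' h ≠ T.max' h)

include h hA hfix

lemma memA : T.max' h - T.min' h ∈ T ∧ T.min' h < T.max' h - T.min' h := by
  have hmu : T.min' h ≤ T.max' h := T.min'_le _ (T.max'_mem h)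
  have hmem : T.max' h - T.min' h ∈ T := kk_mem T h (by omega) (by omega)
  have := T.min'_le _ hmem
  exact ⟨hmem, by omega⟩

lemma mem_opA {x : ℕ} :
    x ∈ opA T h ↔ x = T.max' h + 1 ∨ (x ∈ T ∧ x ≠ T.min' h ∧ x ≠ T.max' h - T.min' h) := by
  simp only [opA, Finset.mem_insert, Finset.mem_erase]
  tauto

lemma cardA : (opA T h).card + 1 = T.card := by
  obtain ⟨hmem, hlt⟩ := memA h hA hfix
  have h1 : T.max' h - T.min' h ∈ T.erase (T.min' h) :=
    Finset.mem_erase.2 ⟨by omega, hmem⟩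
  have h2 : T.max' h + 1 ∉ (T.erase (T.min' h)).erase (T.max' h - T.min' h) := by
    intro hc
    have := T.le_max' _ (Finset.mem_of_mem_erase (Finset.mem_of_mem_erase hc))
    omega
  have c1 : (T.erase (T.min' h)).card = T.card - 1 := Finset.card_erase_of_mem (T.min'_mem h)
  have c2 : ((T.erase (T.min' h)).erase (T.max' h - T.min' h)).card
      = (T.erase (T.min' h)).card - 1 := Finset.card_erase_of_mem h1
  have c3 : 1 ≤ (T.erase (T.min' h)).card := Finset.card_pos.2 ⟨_, h1⟩
  have c4 : 1 ≤ T.card := Finset.card_pos.2 h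
  rw [opA, Finset.card_insert_of_notMem h2]
  omega

lemma wA : w (opA T h) = w T := by
  obtain ⟨hmem, hlt⟩ := memA h hA hfix
  have hmu : T.min' h ≤ T.max' h := T.min'_le _ (T.max'_mem h)
  have h1 : T.max' h - T.min' h ∈ T.erase (T.min' h) :=
    Finset.mem_erase.2 ⟨by omega, hmem⟩
  have h2 : T.max' h + 1 ∉ (T.erase (T.min' h)).erase (T.max' h - T.min' h) := by
    intro hc
    have := T.le_max' _ (Finset.mem_of_mem_erase (Finset.mem_of_mem_erase hc))
    omega
  have e1 : ∑ x ∈ T.erase (T.min' h), (x + 1) + (T.min' h + 1) = w T :=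
    Finset.sum_erase_add _ _ (T.min'_mem h)
  have e2 : ∑ x ∈ (T.erase (T.min' h)).erase (T.max' h - T.min' h), (x + 1)
      + (T.max' h - T.min' h + 1) = ∑ x ∈ T.erase (T.min' h), (x + 1) :=
    Finset.sum_erase_add _ _ h1
  rw [opA, w, Finset.sum_insert h2]
  omega

lemma nonemptyA : (opA T h).Nonempty := ⟨_, Finset.mem_insert_self _ _⟩

lemma maxA : (opA T h).max' (nonemptyA h hA hfix) = T.max' h + 1 := by
  apply max'_eq _ _ _ (Finset.mem_insert_self _ _)
  intro b hb
  rcases (mem_opA h hA hfix).1 hb with hb | hb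
  · omega
  · have := T.le_max' _ hb.1
    omega

lemma minA_ge : ∀ x ∈ opA T h, T.min' h + 1 ≤ x := by
  have hmu : T.min' h ≤ T.max' h := T.min'_le _ (T.max'_mem h)
  intro x hx
  rcases (mem_opA h hA hfix).1 hx with hx | hx
  · omega
  · have := T.min'_le _ hx.1
    omega

lemma kkA : kk (opA T h) (nonemptyA h hA hfix) = T.max' h + 1 - T.min' h := by
  have hmu : T.min' h ≤ T.max' h := T.min'_le _ (T.max'_mem h)
  obtain ⟨hmem, hlt⟩ := memA h hA hfix
  apply le_antisymm
  · apply kk_le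
    rw [maxA h hA hfix]
    intro x hx
    rw [Finset.mem_Ico] at hx
    rw [mem_opA h hA hfix]
    rcases Nat.lt_or_ge x (T.max' h + 1) with h1 | h1
    · right
      exact ⟨kk_mem T h (by omega) (by omega), by omega, by omega⟩
    · left; omega
  · apply kk_ge
    · have hx : T.max' h + 1 - T.min' h - 1 = T.max' h - T.min' h := by omega
      rw [hx, mem_opA h hA hfix]
      push_neg
      exact ⟨by omega, fun _ _ => rfl⟩
    · omega
    · rw [maxA h hA hfix]; omega

lemma goodB_opA :
    (opA T h).max' (nonemptyA h hA hfix) <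
      (opA T h).min' (nonemptyA h hA hfix) + kk (opA T h) (nonemptyA h hA hfix) ∧
    (opA T h).max' (nonemptyA h hA hfix) + 1 ≠ 2 * kk (opA T h) (nonemptyA h hA hfix) := by
  have hmu : T.min' h ≤ T.max' h := T.min'_le _ (T.max'_mem h)
  have hmin := minA_ge h hA hfix _ ((opA T h).min'_mem (nonemptyA h hA hfix))
  rw [maxA h hA hfix, kkA h hA hfix]
  omega

lemma opB_opA : opB (opA T h) (nonemptyA h hA hfix) = T := by
  have hmu : T.min' h ≤ T.max' h := T.min'_le _ (T.max'_mem h)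
  obtain ⟨hmem, hlt⟩ := memA h hA hfix
  have h2 : T.max' h + 1 ∉ (T.erase (T.min' h)).erase (T.max' h - T.min' h) := by
    intro hc
    have := T.le_max' _ (Finset.mem_of_mem_erase (Finset.mem_of_mem_erase hc))
    omega
  rw [opB, maxA h hA hfix, kkA h hA hfix]
  have e1 : T.max' h + 1 - (T.max' h + 1 - T.min' h) = T.min' h := by omega
  have e2 : T.max' h + 1 - T.min' h - 1 = T.max' h - T.min' h := by omega
  rw [e1, e2, opA, Finset.erase_insert h2,
    Finset.insert_erase (Finset.mem_erase.2 ⟨by omega, hmem⟩),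
    Finset.insert_erase (T.min'_mem h)]

end CaseA

end PNT
end Work2

section Work3
set_option linter.unusedSectionVars false
open Finset
namespace PNT

section CaseB

variable {T : Finset ℕ} (h : T.Nonempty)
  (hB : T.max' h < T.min' h + kk T h) (hfix : T.max' h + 1 ≠ 2 * kk T h)

include h hB hfix

lemma kB : 2 ≤ kk T h ∧ T.max' h ≤ 2 * kk T h - 2 ∧ T.max' h - kk T h < T.min' h := by
  have hkm : kk T h ≤ T.max' h := kk_le_max T h
  have hmu : T.min' h ≤ T.max' h := T.min'_le _ (T.max'_mem h)
  have hk1 : 1 ≤ kk T h := by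
    by_contra hc
    have h0 : (0 : ℕ) ∈ T := kk_mem T h (by omega) (by omega)
    have := T.min'_le _ h0
    omega
  have hkT : kk T h ∈ T := kk_mem T h le_rfl hkm
  have hμk : T.min' h ≤ kk T h := T.min'_le _ hkT
  have hm2 : T.max' h ≤ 2 * kk T h - 2 := by
    rcases eq_or_lt_of_le hμk with he | hl
    · omega
    · have hne : T.min' h ≠ kk T h - 1 := by
        intro hc
        exact kk_gap T h hk1 (hc ▸ T.min'_mem h)
      omega
  exact ⟨by omega, hm2, by omega⟩

lemma membsB : T.max' h - kk T h ∉ T ∧ kk T h - 1 ∉ T ∧ T.max' h - kk T h < kk T h - 1 := by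
  obtain ⟨hk2, hm2, hmk⟩ := kB h hB hfix
  have hkm : kk T h ≤ T.max' h := kk_le_max T h
  refine ⟨fun hc => ?_, kk_gap T h (by omega), by omega⟩
  have := T.min'_le _ hc
  omega

lemma mem_opB {x : ℕ} :
    x ∈ opB T h ↔ x = T.max' h - kk T h ∨ x = kk T h - 1 ∨ (x ∈ T ∧ x ≠ T.max' h) := by
  simp only [opB, Finset.mem_insert, Finset.mem_erase]
  tauto

lemma cardB : (opB T h).card = T.card + 1 := by
  obtain ⟨hm1, hm2, hm3⟩ := membsB h hB hfix
  have h1 : kk T h - 1 ∉ T.erase (T.max' h) := fun hc => hm2 (Finset.mem_of_mem_erase hc)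
  have h2 : T.max' h - kk T h ∉ insert (kk T h - 1) (T.erase (T.max' h)) := by
    rw [Finset.mem_insert]
    push_neg
    exact ⟨by omega, fun hc => hm1 (Finset.mem_of_mem_erase hc)⟩
  have c4 : 1 ≤ T.card := Finset.card_pos.2 h
  rw [opB, Finset.card_insert_of_notMem h2, Finset.card_insert_of_notMem h1,
    Finset.card_erase_of_mem (T.max'_mem h)]
  omega

lemma wB : w (opB T h) = w T := by
  obtain ⟨hm1, hm2, hm3⟩ := membsB h hB hfix
  obtain ⟨hk2, _, _⟩ := kB h hB hfix
  have hkm : kk T h ≤ T.max' h := kk_le_max T h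
  have h1 : kk T h - 1 ∉ T.erase (T.max' h) := fun hc => hm2 (Finset.mem_of_mem_erase hc)
  have h2 : T.max' h - kk T h ∉ insert (kk T h - 1) (T.erase (T.max' h)) := by
    rw [Finset.mem_insert]
    push_neg
    exact ⟨by omega, fun hc => hm1 (Finset.mem_of_mem_erase hc)⟩
  have e1 : ∑ x ∈ T.erase (T.max' h), (x + 1) + (T.max' h + 1) = w T :=
    Finset.sum_erase_add _ _ (T.max'_mem h)
  rw [opB, w, Finset.sum_insert h2, Finset.sum_insert h1]
  omega

lemma nonemptyB : (opB T h).Nonempty := ⟨_, Finset.mem_insert_self _ _⟩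

lemma maxB : (opB T h).max' (nonemptyB h hB hfix) = T.max' h - 1 := by
  obtain ⟨hk2, hm2, hmk⟩ := kB h hB hfix
  have hkm : kk T h ≤ T.max' h := kk_le_max T h
  apply max'_eq
  · rw [mem_opB h hB hfix]
    rcases eq_or_lt_of_le hkm with he | hl
    · right; left; omega
    · right; right
      exact ⟨kk_mem T h (by omega) (by omega), by omega⟩
  · intro b hb
    rcases (mem_opB h hB hfix).1 hb with hb | hb | hb
    · omega
    · omega
    · have := T.le_max' _ hb.1
      omega

lemma minB : (opB T h).min' (nonemptyB h hB hfix) = T.max' h - kk T h := by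
  obtain ⟨hk2, hm2, hmk⟩ := kB h hB hfix
  obtain ⟨hm1, hm2', hm3⟩ := membsB h hB hfix
  apply min'_eq
  · rw [mem_opB h hB hfix]; left; rfl
  · intro b hb
    rcases (mem_opB h hB hfix).1 hb with hb | hb | hb
    · omega
    · omega
    · have := T.min'_le _ hb.1
      omega

lemma kkB_le : kk (opB T h) (nonemptyB h hB hfix) ≤ kk T h - 1 := by
  obtain ⟨hk2, hm2, hmk⟩ := kB h hB hfix
  have hkm : kk T h ≤ T.max' h := kk_le_max T h
  apply kk_le
  rw [maxB h hB hfix]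
  intro x hx
  rw [Finset.mem_Ico] at hx
  rw [mem_opB h hB hfix]
  rcases eq_or_lt_of_le hx.1 with he | hl
  · right; left; omega
  · right; right
    exact ⟨kk_mem T h (by omega) (by omega), by omega⟩

lemma goodA_opB :
    (opB T h).min' (nonemptyB h hB hfix) + kk (opB T h) (nonemptyB h hB hfix) ≤
      (opB T h).max' (nonemptyB h hB hfix) ∧
    2 * (opB T h).min' (nonemptyB h hB hfix) ≠ (opB T h).max' (nonemptyB h hB hfix) := by
  obtain ⟨hk2, hm2, hmk⟩ := kB h hB hfix
  have hkm : kk T h ≤ T.max' h := kk_le_max T h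
  have hkb := kkB_le h hB hfix
  rw [maxB h hB hfix, minB h hB hfix]
  omega

lemma opA_opB : opA (opB T h) (nonemptyB h hB hfix) = T := by
  obtain ⟨hk2, hm2, hmk⟩ := kB h hB hfix
  obtain ⟨hm1, hm2', hm3⟩ := membsB h hB hfix
  have hkm : kk T h ≤ T.max' h := kk_le_max T h
  have h1 : kk T h - 1 ∉ T.erase (T.max' h) := fun hc => hm2' (Finset.mem_of_mem_erase hc)
  have h2 : T.max' h - kk T h ∉ insert (kk T h - 1) (T.erase (T.max' h)) := by
    rw [Finset.mem_insert]
    push_neg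
    exact ⟨by omega, fun hc => hm1 (Finset.mem_of_mem_erase hc)⟩
  rw [opA, maxB h hB hfix, minB h hB hfix]
  have e1 : T.max' h - 1 + 1 = T.max' h := by omega
  have e2 : T.max' h - 1 - (T.max' h - kk T h) = kk T h - 1 := by omega
  rw [e1, e2, opB, Finset.erase_insert h2, Finset.erase_insert h1,
    Finset.insert_erase (T.max'_mem h)]

end CaseB

end PNT
end Work3

section Work4
set_option linter.unusedSectionVars false
open Finset
namespace PNT

lemma stair_pos (n : ℤ) (hn : 0 < n) :
    stair n = Finset.Ico (n.toNat - 1) (2 * n.toNat - 1) := by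
  rw [stair, if_pos hn]

lemma stair_nonpos (n : ℤ) (hn : ¬ 0 < n) :
    stair n = Finset.Ico (-n).toNat (2 * (-n).toNat) := by
  rw [stair, if_neg hn]

lemma nonempty_of_notin {T : Finset ℕ} (hT : T ∉ Set.range stair) : T.Nonempty := by
  rw [Finset.nonempty_iff_ne_empty]
  intro hc
  exact hT ⟨0, by rw [stair_zero, hc]⟩

lemma fixedA {T : Finset ℕ} (h : T.Nonempty) (hA : T.min' h + kk T h ≤ T.max' h)
    (hfx : 2 * T.min' h = T.max' h) : T = stair (T.min' h + 1) := by
  have hmu : T.min' h ≤ T.max' h := T.min'_le _ (T.max'_mem h)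
  rw [stair_pos _ (by positivity)]
  have ht : ((T.min' h : ℤ) + 1).toNat = T.min' h + 1 := by omega
  rw [ht]
  apply Finset.Subset.antisymm
  · intro x hx
    have h1 := T.min'_le _ hx
    have h2 := T.le_max' _ hx
    rw [Finset.mem_Ico]
    omega
  · intro x hx
    rw [Finset.mem_Ico] at hx
    exact kk_mem T h (by omega) (by omega)

lemma fixedB {T : Finset ℕ} (h : T.Nonempty) (hB : T.max' h < T.min' h + kk T h)
    (hfx : T.max' h + 1 = 2 * kk T h) : T = stair (-(kk T h : ℤ)) := by
  have hkm : kk T h ≤ T.max' h := kk_le_max T h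
  have hk1 : 1 ≤ kk T h := by omega
  have hkT : kk T h ∈ T := kk_mem T h le_rfl hkm
  have hμk : T.min' h ≤ kk T h := T.min'_le _ hkT
  have hμ : T.min' h = kk T h := by
    rcases eq_or_lt_of_le hμk with he | hl
    · exact he
    · have hne : T.min' h ≠ kk T h - 1 := by
        intro hc
        exact kk_gap T h hk1 (hc ▸ T.min'_mem h)
      omega
  rw [stair_nonpos _ (by omega)]
  have ht : (-(-(kk T h : ℤ))).toNat = kk T h := by omega
  rw [ht]
  apply Finset.Subset.antisymm
  · intro x hx
    have h1 := T.min'_le _ hx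
    have h2 := T.le_max' _ hx
    rw [Finset.mem_Ico]
    omega
  · intro x hx
    rw [Finset.mem_Ico] at hx
    exact kk_mem T h (by omega) (by omega)

lemma notin_range_of_goodB {S : Finset ℕ} (h : S.Nonempty)
    (hB : S.max' h < S.min' h + kk S h) (hfx : S.max' h + 1 ≠ 2 * kk S h) :
    S ∉ Set.range stair := by
  rintro ⟨n, rfl⟩
  by_cases hn : 0 < n
  · set a := n.toNat with ha
    have ha1 : 1 ≤ a := by omega
    have hIco : stair n = Finset.Ico (a - 1) (2 * a - 1) := stair_pos n hn
    have hlt : a - 1 < 2 * a - 1 := by omega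
    have hmax := Ico_max' (a - 1) (2 * a - 1) hlt (hIco ▸ h)
    have hmin := Ico_min' (a - 1) (2 * a - 1) hlt (hIco ▸ h)
    have hkk := Ico_kk (a - 1) (2 * a - 1) hlt (hIco ▸ h)
    rw [show (stair n).max' h = 2 * a - 1 - 1 by rw [← hmax]; congr 1 <;> rw [hIco],
      show (stair n).min' h = a - 1 by rw [← hmin]; congr 1 <;> rw [hIco],
      show kk (stair n) h = a - 1 by rw [← hkk]; congr 1 <;> rw [hIco]] at hB
    omega
  · set a := (-n).toNat with ha
    have hIco : stair n = Finset.Ico a (2 * a) := stair_nonpos n hn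
    have ha1 : 1 ≤ a := by
      by_contra hc
      have : stair n = ∅ := by rw [hIco]; simp; omega
      rw [this] at h
      exact Finset.not_nonempty_empty h
    have hlt : a < 2 * a := by omega
    have hmax := Ico_max' a (2 * a) hlt (hIco ▸ h)
    have hkk := Ico_kk a (2 * a) hlt (hIco ▸ h)
    rw [show (stair n).max' h = 2 * a - 1 by rw [← hmax]; congr 1 <;> rw [hIco],
      show kk (stair n) h = a by rw [← hkk]; congr 1 <;> rw [hIco]] at hfx
    omega

lemma notin_range_of_goodA {S : Finset ℕ} (h : S.Nonempty)
    (hA : S.min' h + kk S h ≤ S.max' h) (hfx : 2 * S.min' h ≠ S.max' h) :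
    S ∉ Set.range stair := by
  rintro ⟨n, rfl⟩
  by_cases hn : 0 < n
  · set a := n.toNat with ha
    have ha1 : 1 ≤ a := by omega
    have hIco : stair n = Finset.Ico (a - 1) (2 * a - 1) := stair_pos n hn
    have hlt : a - 1 < 2 * a - 1 := by omega
    have hmax := Ico_max' (a - 1) (2 * a - 1) hlt (hIco ▸ h)
    have hmin := Ico_min' (a - 1) (2 * a - 1) hlt (hIco ▸ h)
    rw [show (stair n).max' h = 2 * a - 1 - 1 by rw [← hmax]; congr 1 <;> rw [hIco],
      show (stair n).min' h = a - 1 by rw [← hmin]; congr 1 <;> rw [hIco]] at hfx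
    omega
  · set a := (-n).toNat with ha
    have hIco : stair n = Finset.Ico a (2 * a) := stair_nonpos n hn
    have ha1 : 1 ≤ a := by
      by_contra hc
      have : stair n = ∅ := by rw [hIco]; simp; omega
      rw [this] at h
      exact Finset.not_nonempty_empty h
    have hlt : a < 2 * a := by omega
    have hmax := Ico_max' a (2 * a) hlt (hIco ▸ h)
    have hmin := Ico_min' a (2 * a) hlt (hIco ▸ h)
    have hkk := Ico_kk a (2 * a) hlt (hIco ▸ h)
    rw [show (stair n).max' h = 2 * a - 1 by rw [← hmax]; congr 1 <;> rw [hIco],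
      show (stair n).min' h = a by rw [← hmin]; congr 1 <;> rw [hIco],
      show kk (stair n) h = a by rw [← hkk]; congr 1 <;> rw [hIco]] at hA
    omega

/-- Franklin's involution. -/
noncomputable def frank (T : Finset ℕ) : Finset ℕ :=
  if h : T.Nonempty then
    (if T.min' h + kk T h ≤ T.max' h then opA T h else opB T h) else ∅

lemma frank_main {T : Finset ℕ} (hT : T ∉ Set.range stair) :
    frank T ∉ Set.range stair ∧ frank (frank T) = T ∧ w (frank T) = w T ∧
      ((frank T).card + 1 = T.card ∨ (frank T).card = T.card + 1) := by
  have h := nonempty_of_notin hT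
  by_cases hc : T.min' h + kk T h ≤ T.max' h
  · have hfx : 2 * T.min' h ≠ T.max' h := fun hfx => hT ⟨_, (fixedA h hc hfx).symm⟩
    have hft : frank T = opA T h := by rw [frank, dif_pos h, if_pos hc]
    obtain ⟨hB', hfx'⟩ := goodB_opA h hc hfx
    have h' := nonemptyA h hc hfx
    refine ⟨hft ▸ notin_range_of_goodB h' hB' hfx', ?_, hft ▸ wA h hc hfx,
      Or.inl (hft ▸ cardA h hc hfx)⟩
    rw [hft, frank, dif_pos h', if_neg (by omega), opB_opA h hc hfx]
  · push_neg at hc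
    have hfx : T.max' h + 1 ≠ 2 * kk T h := fun hfx => hT ⟨_, (fixedB h hc hfx).symm⟩
    have hft : frank T = opB T h := by rw [frank, dif_pos h, if_neg (by omega)]
    obtain ⟨hA', hfx'⟩ := goodA_opB h hc hfx
    have h' := nonemptyB h hc hfx
    refine ⟨hft ▸ notin_range_of_goodA h' hA' hfx', ?_, hft ▸ wB h hc hfx,
      Or.inr (hft ▸ cardB h hc hfx)⟩
    rw [hft, frank, dif_pos h', if_pos hA', opA_opB h hc hfx]

end PNT
end Work4

section Work5
set_option linter.unusedSectionVars false
open Finset Filter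
namespace PNT

lemma norm_g (q : ℂ) (T : Finset ℕ) : ‖g q T‖ = ‖q‖ ^ w T := by
  rw [g_eq, norm_mul, norm_pow, norm_neg, norm_one, one_pow, one_mul, norm_pow]

lemma sum_pow_w_eq_prod (r : ℝ) (s : Finset ℕ) :
    ∑ T ∈ s.powerset, r ^ w T = ∏ i ∈ s, (r ^ (i + 1) + 1) := by
  rw [Finset.prod_add]
  refine Finset.sum_congr rfl fun T _ => ?_
  rw [Finset.prod_const_one, mul_one, Finset.prod_pow_eq_pow_sum, w]

lemma summable_norm_g {q : ℂ} (hq : ‖q‖ < 1) :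
    Summable (fun T : Finset ℕ => ‖q‖ ^ w T) := by
  set r := ‖q‖ with hr
  have hr0 : 0 ≤ r := norm_nonneg q
  apply summable_of_sum_le (c := Real.exp (r * (1 - r)⁻¹))
  · intro T
    positivity
  · intro u
    set N := (u.sup fun T => T.sup id) + 1 with hN
    have hsub : u ⊆ (Finset.range N).powerset := by
      intro T hT
      rw [Finset.mem_powerset]
      intro x hx
      have h1 : x ≤ T.sup id := Finset.le_sup (f := id) hx
      have h2 : T.sup id ≤ u.sup fun T => T.sup id := Finset.le_sup (f := fun T => T.sup id) hT
      rw [Finset.mem_range]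
      omega
    calc ∑ T ∈ u, r ^ w T ≤ ∑ T ∈ (Finset.range N).powerset, r ^ w T := by
          apply Finset.sum_le_sum_of_subset_of_nonneg hsub
          intro T _ _
          positivity
      _ = ∏ i ∈ Finset.range N, (r ^ (i + 1) + 1) := sum_pow_w_eq_prod r _
      _ ≤ ∏ i ∈ Finset.range N, Real.exp (r ^ (i + 1)) := by
          apply Finset.prod_le_prod
          · intro i _; positivity
          · intro i _
            exact Real.add_one_le_exp _
      _ = Real.exp (∑ i ∈ Finset.range N, r ^ (i + 1)) := (Real.exp_sum _ _).symm
      _ ≤ Real.exp (r * (1 - r)⁻¹) := by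
          apply Real.exp_le_exp.2
          have : ∑ i ∈ Finset.range N, r ^ (i + 1) = r * ∑ i ∈ Finset.range N, r ^ i := by
            rw [Finset.mul_sum]
            exact Finset.sum_congr rfl fun i _ => by rw [pow_succ']
          rw [this]
          apply mul_le_mul_of_nonneg_left _ hr0
          have hsum : ∑' i : ℕ, r ^ i = (1 - r)⁻¹ := tsum_geometric_of_lt_one hr0 hq
          rw [← hsum]
          exact Summable.sum_le_tsum _ (fun i _ => by positivity) (summable_geometric_of_lt_one hr0 hq)

lemma summable_g {q : ℂ} (hq : ‖q‖ < 1) : Summable (g q) := by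
  apply Summable.of_norm
  exact (summable_norm_g hq).congr (fun T => (norm_g q T).symm)

lemma tendsto_powerset :
    Tendsto (Finset.powerset : Finset ℕ → Finset (Finset ℕ)) atTop atTop := by
  rw [Filter.tendsto_atTop_atTop]
  intro b
  refine ⟨b.sup id, fun a ha => ?_⟩
  intro T hT
  rw [Finset.mem_powerset]
  calc T ≤ b.sup id := Finset.le_sup (f := id) hT
    _ ≤ a := ha

lemma prod_eq_sum_powerset (q : ℂ) (s : Finset ℕ) :
    ∏ i ∈ s, (1 - q * q ^ i) = ∑ T ∈ s.powerset, g q T := by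
  have : ∀ i ∈ s, (1 - q * q ^ i) = (-(q * q ^ i)) + 1 := fun i _ => by ring
  rw [Finset.prod_congr rfl this, Finset.prod_add]
  exact Finset.sum_congr rfl fun T _ => by rw [Finset.prod_const_one, mul_one, g]

lemma hasProd_g {q : ℂ} (hq : ‖q‖ < 1) :
    HasProd (fun n : ℕ => 1 - q * q ^ n) (∑' T : Finset ℕ, g q T) := by
  have hs : HasSum (g q) (∑' T : Finset ℕ, g q T) := (summable_g hq).hasSum
  have comp : Tendsto (fun s : Finset ℕ => ∑ T ∈ s.powerset, g q T) atTop
      (nhds (∑' T : Finset ℕ, g q T)) := hs.comp tendsto_powerset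
  rw [HasProd]
  convert comp using 2 with s
  · exact prod_eq_sum_powerset q s
  rfl

end PNT
end Work5

section Work6
set_option linter.unusedSectionVars false
open Finset
namespace PNT

lemma card_stair (n : ℤ) : (stair n).card = n.natAbs := by
  by_cases hn : 0 < n
  · rw [stair_pos n hn, Nat.card_Ico]
    omega
  · rw [stair_nonpos n hn, Nat.card_Ico]
    omega

lemma two_mul_w_range (n : ℕ) : 2 * w (Finset.range n) = n * (n + 1) := by
  induction n with
  | zero => simp [w]
  | succ m ih =>
    rw [w, Finset.sum_range_succ, ← w] at *
    ring_nf
    ring_nf at ih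
    omega

lemma two_mul_w_Ico (a b : ℕ) (hab : a ≤ b) :
    2 * w (Finset.Ico a b) + a * (a + 1) = b * (b + 1) := by
  have hsplit : w (Finset.Ico 0 a) + w (Finset.Ico a b) = w (Finset.Ico 0 b) := by
    rw [w, w, w]
    exact Finset.sum_Ico_consecutive _ (Nat.zero_le a) hab
  have h1 := two_mul_w_range a
  have h2 := two_mul_w_range b
  rw [Finset.range_eq_Ico] at h1 h2
  omega

lemma w_stair (n : ℤ) : 2 * (w (stair n) : ℤ) = n * (3 * n - 1) := by
  by_cases hn : 0 < n
  · set a := n.toNat with ha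
    have ha1 : 1 ≤ a := by omega
    have han : (a : ℤ) = n := by omega
    rw [stair_pos n hn, ← ha]
    have hw := two_mul_w_Ico (a - 1) (2 * a - 1) (by omega)
    have key : 2 * (w (Finset.Ico (a - 1) (2 * a - 1)) : ℤ)
        + ((a - 1 : ℕ) : ℤ) * (((a - 1 : ℕ) : ℤ) + 1)
        = ((2 * a - 1 : ℕ) : ℤ) * (((2 * a - 1 : ℕ) : ℤ) + 1) := by exact_mod_cast hw
    have c1 : ((2 * a - 1 : ℕ) : ℤ) = 2 * n - 1 := by omega
    have c2 : ((a - 1 : ℕ) : ℤ) = n - 1 := by omega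
    rw [c1, c2] at key
    linear_combination key
  · set a := (-n).toNat with ha
    have han : (a : ℤ) = -n := by omega
    rw [stair_nonpos n hn, ← ha]
    have hw := two_mul_w_Ico a (2 * a) (by omega)
    have key : 2 * (w (Finset.Ico a (2 * a)) : ℤ)
        + ((a : ℕ) : ℤ) * (((a : ℕ) : ℤ) + 1)
        = ((2 * a : ℕ) : ℤ) * (((2 * a : ℕ) : ℤ) + 1) := by exact_mod_cast hw
    have c1 : ((2 * a : ℕ) : ℤ) = -2 * n := by omega
    have c2 : ((a : ℕ) : ℤ) = -n := by omega
    rw [c1, c2] at key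
    linear_combination key

lemma stair_injective : Function.Injective stair := by
  intro a b hab
  have hcard : a.natAbs = b.natAbs := by
    rw [← card_stair a, ← card_stair b, hab]
  rcases Int.natAbs_eq a with h1 | h1 <;> rcases Int.natAbs_eq b with h2 | h2
  · omega
  · -- a ≥ 0, b ≤ 0
    by_cases hz : a.natAbs = 0
    · omega
    · exfalso
      set c := a.natAbs with hc
      have hapos : 0 < a := by omega
      have hbnp : ¬ 0 < b := by omega
      have e1 : stair a = Finset.Ico (c - 1) (2 * c - 1) := by
        rw [stair_pos a hapos]; congr 1 <;> omega
      have e2 : stair b = Finset.Ico c (2 * c) := by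
        rw [stair_nonpos b hbnp]; congr 1 <;> omega
      have hm : c - 1 ∈ stair a := by
        rw [e1, Finset.mem_Ico]; omega
      rw [hab, e2, Finset.mem_Ico] at hm
      omega
  · by_cases hz : a.natAbs = 0
    · omega
    · exfalso
      set c := a.natAbs with hc
      have hbpos : 0 < b := by omega
      have hanp : ¬ 0 < a := by omega
      have e1 : stair b = Finset.Ico (c - 1) (2 * c - 1) := by
        rw [stair_pos b hbpos]; congr 1 <;> omega
      have e2 : stair a = Finset.Ico c (2 * c) := by
        rw [stair_nonpos a hanp]; congr 1 <;> omega
      have hm : c - 1 ∈ stair b := by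
        rw [e1, Finset.mem_Ico]; omega
      rw [← hab, e2, Finset.mem_Ico] at hm
      omega
  · omega

lemma neg_one_zpow (n : ℤ) : (-1 : ℂ) ^ n = (-1 : ℂ) ^ n.natAbs := by
  rcases Int.natAbs_eq n with h | h
  · conv_lhs => rw [h]
    rw [zpow_natCast]
  · conv_lhs => rw [h]
    rw [zpow_neg, zpow_natCast, ← inv_pow, inv_neg, inv_one]

lemma g_stair (q : ℂ) (n : ℤ) :
    g q (stair n) = (-1 : ℂ) ^ n * q ^ ((n * (3 * n - 1)) / 2 : ℤ) := by
  rw [g_eq, card_stair, ← neg_one_zpow]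
  congr 1
  have h2 := w_stair n
  have hdiv : (n * (3 * n - 1)) / 2 = (w (stair n) : ℤ) := by
    rw [← h2, Int.mul_ediv_cancel_left _ (by norm_num)]
  rw [hdiv, zpow_natCast]

end PNT
end Work6

section Work7
open Finset
namespace PNT

lemma tsum_compl_eq_zero (q : ℂ) :
    ∑' x : ↥(Set.range stair)ᶜ, g q ↑x = 0 := by
  have hmem : ∀ x : ↥(Set.range stair)ᶜ, (x : Finset ℕ) ∉ Set.range stair := fun x => x.2
  let e : ↥(Set.range stair)ᶜ ≃ ↥(Set.range stair)ᶜ :=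
    { toFun := fun x => ⟨frank x, (frank_main (hmem x)).1⟩
      invFun := fun x => ⟨frank x, (frank_main (hmem x)).1⟩
      left_inv := fun x => Subtype.ext (frank_main (hmem x)).2.1
      right_inv := fun x => Subtype.ext (frank_main (hmem x)).2.1 }
  have hneg : ∀ x : ↥(Set.range stair)ᶜ, g q (frank ↑x) = - g q ↑x := by
    intro x
    obtain ⟨-, -, hw, hcard⟩ := frank_main (hmem x)
    rw [g_eq, g_eq, hw]
    rcases hcard with hc | hc
    · rw [show ((x : Finset ℕ)).card = (frank (x : Finset ℕ)).card + 1 from hc.symm, pow_succ]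
      ring
    · rw [hc, pow_succ]
      ring
  have h1 : ∑' x : ↥(Set.range stair)ᶜ, g q ↑(e x) = ∑' x : ↥(Set.range stair)ᶜ, g q ↑x :=
    e.tsum_eq (fun x : ↥(Set.range stair)ᶜ => g q ↑x)
  have h2 : ∀ x : ↥(Set.range stair)ᶜ, g q ↑(e x) = - g q ↑x := fun x => hneg x
  rw [tsum_congr h2, tsum_neg] at h1
  have h3 : (2 : ℂ) * (∑' x : ↥(Set.range stair)ᶜ, g q ↑x) = 0 := by linear_combination -h1
  exact (mul_eq_zero.mp h3).resolve_left two_ne_zero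

end PNT
end Work7


theorem stmt_3 (q : ℂ) (hq : ‖q‖ < 1) :
    qPoch q q = ∑' n : ℤ, (-1 : ℂ) ^ n * q ^ ((n * (3 * n - 1)) / 2 : ℤ) := by
  have hsum := PNT.summable_g hq
  have hprod := PNT.hasProd_g hq
  have h1 : qPoch q q = ∑' T : Finset ℕ, PNT.g q T := by
    rw [qPoch]
    exact hprod.tprod_eq
  have hs1 : Summable ((PNT.g q) ∘ ((↑) : ↥(Set.range PNT.stair) → Finset ℕ)) :=
    hsum.subtype _
  have hs2 : Summable ((PNT.g q) ∘ ((↑) : ↥(Set.range PNT.stair)ᶜ → Finset ℕ)) :=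
    hsum.subtype _
  have hsplit := Summable.tsum_add_tsum_compl (s := Set.range PNT.stair) hs1 hs2
  have hrange : ∑' x : ↥(Set.range PNT.stair), PNT.g q ↑x = ∑' n : ℤ, PNT.g q (PNT.stair n) :=
    ((Equiv.ofInjective _ PNT.stair_injective).tsum_eq
      (fun x : ↥(Set.range PNT.stair) => PNT.g q ↑x)).symm
  rw [h1, ← hsplit, PNT.tsum_compl_eq_zero q, add_zero, hrange]
  exact tsum_congr (fun n => PNT.g_stair q n)
end
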